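/- arXiv:1301.0961 — 9 statements merged into one kernel-verified Lean document; each statement's English description precedes it below -/
import Mathlib

section
/- A left R-module M is torsion-free (in Hattori's sense) if and only if Tor_1^R(R/rR, M) = 0 for all r ∈ R. -/
open MulOpposite

section CTensor
variable (R : Type) [Ring R]
variable (N : Type) [AddCommGroup N] [Module Rᵐᵒᵖ N]
variable (M : Type) [AddCommGroup M] [Module R M]

def tensorRels : AddSubgroup (FreeAbelianGroup (N × M)) :=
  AddSubgroup.closure
    {x | (∃ n n' m, x = FreeAbelianGroup.of (n + n', m) - FreeAbelianGroup.of (n, m) -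
            FreeAbelianGroup.of (n', m)) ∨
         (∃ n m m', x = FreeAbelianGroup.of (n, m + m') - FreeAbelianGroup.of (n, m) -
            FreeAbelianGroup.of (n, m')) ∨
         (∃ (r : R) (n : N) (m : M), x = FreeAbelianGroup.of (op r • n, m) -
            FreeAbelianGroup.of (n, r • m))}

abbrev CTensor : Type := FreeAbelianGroup (N × M) ⧸ tensorRels R N M

def ctmul (n : N) (m : M) : CTensor R N M :=
  QuotientAddGroup.mk (FreeAbelianGroup.of (n, m))

variable {R N M}

theorem ctmul_add_left (n n' : N) (m : M) :
    ctmul R N M (n + n') m = ctmul R N M n m + ctmul R N M n' m := by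
  rw [eq_comm, ← sub_eq_zero]
  show QuotientAddGroup.mk _ + QuotientAddGroup.mk _ - QuotientAddGroup.mk _ = (0 : CTensor R N M)
  rw [← QuotientAddGroup.mk_add, ← QuotientAddGroup.mk_sub, QuotientAddGroup.eq_zero_iff]
  have h : FreeAbelianGroup.of (n, m) + FreeAbelianGroup.of (n', m) -
      FreeAbelianGroup.of (n + n', m) =
      -(FreeAbelianGroup.of (n + n', m) - FreeAbelianGroup.of (n, m) -
        FreeAbelianGroup.of (n', m)) := by abel
  rw [h]
  exact neg_mem (AddSubgroup.subset_closure (Or.inl ⟨n, n', m, rfl⟩))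

theorem ctmul_add_right (n : N) (m m' : M) :
    ctmul R N M n (m + m') = ctmul R N M n m + ctmul R N M n m' := by
  rw [eq_comm, ← sub_eq_zero]
  show QuotientAddGroup.mk _ + QuotientAddGroup.mk _ - QuotientAddGroup.mk _ = (0 : CTensor R N M)
  rw [← QuotientAddGroup.mk_add, ← QuotientAddGroup.mk_sub, QuotientAddGroup.eq_zero_iff]
  have h : FreeAbelianGroup.of (n, m) + FreeAbelianGroup.of (n, m') -
      FreeAbelianGroup.of (n, m + m') =
      -(FreeAbelianGroup.of (n, m + m') - FreeAbelianGroup.of (n, m) -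
        FreeAbelianGroup.of (n, m')) := by abel
  rw [h]
  exact neg_mem (AddSubgroup.subset_closure (Or.inr (Or.inl ⟨n, m, m', rfl⟩)))

theorem ctmul_smul (r : R) (n : N) (m : M) :
    ctmul R N M (op r • n) m = ctmul R N M n (r • m) := by
  rw [← sub_eq_zero]
  show QuotientAddGroup.mk _ - QuotientAddGroup.mk _ = (0 : CTensor R N M)
  rw [← QuotientAddGroup.mk_sub, QuotientAddGroup.eq_zero_iff]
  apply AddSubgroup.subset_closure
  right; right
  exact ⟨r, n, m, rfl⟩

variable (R N M)

/-- Universal property: lift a balanced biadditive map to the balanced tensor product. -/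
def ctlift {A : Type} [AddCommGroup A] (f : N → M → A)
    (h1 : ∀ n n' m, f (n + n') m = f n m + f n' m)
    (h2 : ∀ n m m', f n (m + m') = f n m + f n m')
    (h3 : ∀ (r : R) n m, f (op r • n) m = f n (r • m)) :
    CTensor R N M →+ A :=
  QuotientAddGroup.lift _ (FreeAbelianGroup.lift fun p => f p.1 p.2) (by
    rw [tensorRels, AddSubgroup.closure_le]
    rintro x (⟨n, n', m, rfl⟩ | ⟨n, m, m', rfl⟩ | ⟨r, n, m, rfl⟩) <;>
      simp [AddMonoidHom.mem_ker, FreeAbelianGroup.lift_apply_of, h1, h2, h3])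

@[simp] theorem ctlift_ctmul {A : Type} [AddCommGroup A] (f : N → M → A) (h1) (h2) (h3)
    (n : N) (m : M) : ctlift R N M f h1 h2 h3 (ctmul R N M n m) = f n m := by
  simp [ctlift, ctmul, QuotientAddGroup.lift_mk, FreeAbelianGroup.lift_apply_of]

end CTensor

section Maps
variable (R : Type) [Ring R]

/-- Functoriality of the balanced tensor product in the right-module variable. -/
def ctmapLeft {N N' : Type} [AddCommGroup N] [Module Rᵐᵒᵖ N] [AddCommGroup N']
    [Module Rᵐᵒᵖ N'] (f : N →ₗ[Rᵐᵒᵖ] N') (M : Type) [AddCommGroup M] [Module R M] :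
    CTensor R N M →+ CTensor R N' M :=
  ctlift R N M (fun n m => ctmul R N' M (f n) m)
    (fun n n' m => by (try dsimp only); rw [map_add, ctmul_add_left])
    (fun n m m' => by (try dsimp only); rw [ctmul_add_right])
    (fun r n m => by (try dsimp only); rw [map_smul, ctmul_smul])

/-- Functoriality of the balanced tensor product in the left-module variable. -/
def ctmapRight (N : Type) [AddCommGroup N] [Module Rᵐᵒᵖ N] {M M' : Type} [AddCommGroup M]
    [Module R M] [AddCommGroup M'] [Module R M'] (f : M →ₗ[R] M') :
    CTensor R N M →+ CTensor R N M' :=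
  ctlift R N M (fun n m => ctmul R N M' n (f m))
    (fun n n' m => by (try dsimp only); rw [ctmul_add_left])
    (fun n m m' => by (try dsimp only); rw [map_add, ctmul_add_right])
    (fun r n m => by (try dsimp only); rw [ctmul_smul, map_smul])

/-- The canonical map `(∏ i, N i) ⊗ M → ∏ i, (N i ⊗ M)`. -/
def ctCanonical {ι : Type} (N : ι → Type) [∀ i, AddCommGroup (N i)]
    [∀ i, Module Rᵐᵒᵖ (N i)] (M : Type) [AddCommGroup M] [Module R M] :
    CTensor R (∀ i, N i) M →+ ∀ i, CTensor R (N i) M :=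
  ctlift R (∀ i, N i) M (fun n m i => ctmul R (N i) M (n i) m)
    (fun n n' m => by funext i; exact ctmul_add_left _ _ _)
    (fun n m m' => by funext i; exact ctmul_add_right _ _ _)
    (fun r n m => by funext i; exact ctmul_smul _ _ _)

end Maps

/-- A left `R`-module `M` is torsion-free in Hattori's sense: if `r • m = 0` then `m` lies in
`𝔯(r)·M`, the additive subgroup generated by products `s • y` with `r * s = 0`. -/
def IsHattoriTorsionFree (R M : Type) [Ring R] [AddCommGroup M] [Module R M] : Prop :=
  ∀ (r : R) (m : M), r • m = 0 →
    m ∈ AddSubgroup.closure {x : M | ∃ (s : R) (y : M), r * s = 0 ∧ x = s • y}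

/-- The canonical map `rR ⊗_R M → M` induced by the inclusion `rR → R` and the isomorphism
`R ⊗_R M ≅ M`.  The vanishing of `Tor₁ᴿ(R/rR, M)` is equivalent (via the short exact sequence
`0 → rR → R → R/rR → 0` and `Tor₁(R, M) = 0`) to the injectivity of this map. -/
def torMap (R : Type) [Ring R] (M : Type) [AddCommGroup M] [Module R M] (r : R) :
    CTensor R ↥(Submodule.span Rᵐᵒᵖ ({r} : Set R)) M →+ M :=
  ctlift R ↥(Submodule.span Rᵐᵒᵖ ({r} : Set R)) M (fun x m => (x : R) • m)
    (fun x y m => by (try dsimp only); rw [Submodule.coe_add, add_smul])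
    (fun x m m' => by (try dsimp only); rw [smul_add])
    (fun s x m => by
      try dsimp only
      rw [Submodule.coe_smul, MulOpposite.smul_eq_mul_unop, MulOpposite.unop_op, mul_smul])

section HattoriProof

variable {R M : Type} [Ring R] [AddCommGroup M] [Module R M]

theorem ctmul_zero_left {N : Type} [AddCommGroup N] [Module Rᵐᵒᵖ N] (m : M) :
    ctmul R N M 0 m = 0 := by
  have h := ctmul_add_left (R := R) (N := N) (M := M) 0 0 m
  rw [add_zero] at h
  exact left_eq_add.mp h

/-- `r` as an element of `rR = span Rᵐᵒᵖ {r}`. -/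
def rGen (r : R) : ↥(Submodule.span Rᵐᵒᵖ ({r} : Set R)) :=
  ⟨r, Submodule.mem_span_singleton_self r⟩

/-- The subgroup `𝔯(r)·M`. -/
def hattoriK (r : R) : AddSubgroup M :=
  AddSubgroup.closure {x : M | ∃ (s : R) (y : M), r * s = 0 ∧ x = s • y}

/-- The map `m ↦ r ⊗ m`. -/
def phiMap (r : R) : M →+ CTensor R ↥(Submodule.span Rᵐᵒᵖ ({r} : Set R)) M :=
  AddMonoidHom.mk' (fun m => ctmul R _ M (rGen r) m) (fun m m' => ctmul_add_right _ _ _)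

theorem phi_surjective (r : R) : Function.Surjective (phiMap (M := M) r) := by
  intro z
  refine QuotientAddGroup.induction_on z (fun x => ?_)
  refine FreeAbelianGroup.induction_on
    (motive := fun x => ∃ m, phiMap (M := M) r m = QuotientAddGroup.mk x) x ⟨0, map_zero _⟩ ?_ ?_ ?_
  · rintro ⟨n, m⟩
    obtain ⟨a, ha⟩ := Submodule.mem_span_singleton.mp n.2
    refine ⟨a.unop • m, ?_⟩
    have hn : (op a.unop • rGen r : ↥(Submodule.span Rᵐᵒᵖ ({r} : Set R))) = n :=
      Subtype.ext (by simpa [rGen] using ha)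
    show ctmul R _ M (rGen r) (a.unop • m) = _
    rw [← ctmul_smul, hn]
    rfl
  · rintro p ⟨m, hm⟩
    exact ⟨-m, by rw [map_neg, hm]; rfl⟩
  · rintro p q ⟨m, hm⟩ ⟨m', hm'⟩
    exact ⟨m + m', by rw [map_add, hm, hm']; rfl⟩

theorem torMap_phi (r : R) (m : M) : torMap R M r (phiMap (M := M) r m) = r • m := by
  show torMap R M r (ctmul R _ M (rGen r) m) = r • m
  rw [torMap, ctlift_ctmul]
  rfl

theorem phi_eq_zero_of_mem (r : R) {m : M} (hm : m ∈ hattoriK (M := M) r) :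
    phiMap (M := M) r m = 0 := by
  have hle : hattoriK (M := M) r ≤ (phiMap (M := M) r).ker := by
    rw [hattoriK, AddSubgroup.closure_le]
    rintro x ⟨s, y, hrs, rfl⟩
    show phiMap (M := M) r (s • y) = 0
    show ctmul R _ M (rGen r) (s • y) = 0
    rw [← ctmul_smul]
    have h0 : (op s • rGen r : ↥(Submodule.span Rᵐᵒᵖ ({r} : Set R))) = 0 :=
      Subtype.ext (by simp [rGen, MulOpposite.smul_eq_mul_unop, hrs])
    rw [h0, ctmul_zero_left]
  exact hle hm

theorem mk_quot_eq (r a b : R) (m : M) (h : r * a = r * b) :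
    (QuotientAddGroup.mk (a • m) : M ⧸ hattoriK (M := M) r) = QuotientAddGroup.mk (b • m) := by
  rw [QuotientAddGroup.eq]
  have hx : -(a • m) + b • m = (b - a) • m := by rw [sub_smul]; abel
  rw [hx]
  exact AddSubgroup.subset_closure ⟨b - a, m, by rw [mul_sub, h, sub_self], rfl⟩

/-- A choice of `a` with `r * a = x` for `x ∈ rR`. -/
noncomputable def chooseA (r : R) (x : ↥(Submodule.span Rᵐᵒᵖ ({r} : Set R))) : R :=
  (Submodule.mem_span_singleton.mp x.2).choose.unop

theorem chooseA_spec (r : R) (x : ↥(Submodule.span Rᵐᵒᵖ ({r} : Set R))) :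
    r * chooseA r x = (x : R) := by
  have h := (Submodule.mem_span_singleton.mp x.2).choose_spec
  simpa [MulOpposite.smul_eq_mul_unop, chooseA] using h

theorem quotF_eq (r : R) (x : ↥(Submodule.span Rᵐᵒᵖ ({r} : Set R))) (m : M) (a : R)
    (ha : r * a = (x : R)) :
    (QuotientAddGroup.mk (chooseA r x • m) : M ⧸ hattoriK (M := M) r) =
      QuotientAddGroup.mk (a • m) :=
  mk_quot_eq r _ a m (by rw [chooseA_spec, ha])

/-- The lift `rR ⊗ M →+ M ⧸ 𝔯(r)M` sending `x ⊗ m` to `[a • m]` where `x = r a`. -/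
noncomputable def gLift (r : R) :
    CTensor R ↥(Submodule.span Rᵐᵒᵖ ({r} : Set R)) M →+ M ⧸ hattoriK (M := M) r :=
  ctlift R _ M (fun x m => QuotientAddGroup.mk (chooseA r x • m))
    (fun x y m => by
      rw [quotF_eq r (x + y) m (chooseA r x + chooseA r y)
        (by rw [mul_add, chooseA_spec, chooseA_spec, Submodule.coe_add]), add_smul]
      rfl)
    (fun x m m' => by
      rw [smul_add]; rfl)
    (fun s x m => by
      rw [quotF_eq r (op s • x) m (chooseA r x * s)
        (by rw [← mul_assoc, chooseA_spec, Submodule.coe_smul,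
          MulOpposite.smul_eq_mul_unop, MulOpposite.unop_op]), mul_smul])

theorem gLift_phi (r : R) (m : M) :
    gLift (M := M) r (phiMap (M := M) r m) = QuotientAddGroup.mk m := by
  show gLift (M := M) r (ctmul R _ M (rGen r) m) = QuotientAddGroup.mk m
  rw [gLift, ctlift_ctmul, quotF_eq r (rGen r) m 1 (by rw [mul_one]; rfl), one_smul]

end HattoriProof

/-- **Hattori.** A left `R`-module `M` is torsion-free (in Hattori's sense) if and only if
`Tor₁ᴿ(R/rR, M) = 0` for all `r ∈ R`, the latter being expressed by the injectivity of the
canonical map `rR ⊗_R M → M`. -/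
theorem hattori_torsionFree_iff_tor_vanishes (R M : Type) [Ring R] [AddCommGroup M]
    [Module R M] :
    IsHattoriTorsionFree R M ↔ ∀ r : R, Function.Injective (torMap R M r) := by
  constructor
  · intro htf r
    rw [injective_iff_map_eq_zero]
    intro z hz
    obtain ⟨m, rfl⟩ := phi_surjective (M := M) r z
    rw [torMap_phi] at hz
    exact phi_eq_zero_of_mem r (htf r m hz)
  · intro hinj r m hrm
    have h0 : torMap R M r (phiMap (M := M) r m) = 0 := by rw [torMap_phi, hrm]
    have hz : phiMap (M := M) r m = 0 := by
      apply hinj r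
      rw [h0, map_zero]
    have hg := congrArg (gLift (M := M) r) hz
    rw [map_zero, gLift_phi] at hg
    exact (QuotientAddGroup.eq_zero_iff m).mp hg
end

section
/- A left R-module M is divisible (in Hattori's sense) if and only if Ext^1_R(R/Rr, M) = 0 for all r ∈ R. -/
open CategoryTheory

/-- A left `R`-module `M` is divisible in Hattori's sense: whenever `m` is annihilated by the
left annihilator `𝔩(r)` of `r`, there is `m'` with `m = r • m'`. -/
def IsHattoriDivisible (R M : Type) [Ring R] [AddCommGroup M] [Module R M] : Prop :=
  ∀ (r : R) (m : M), (∀ s : R, s * r = 0 → s • m = 0) → ∃ m' : M, m = r • m'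

noncomputable section HattoriAux

open CategoryTheory Limits

variable {R : Type} [Ring R]

instance hatProjRR : Projective (ModuleCat.of R R) :=
  ModuleCat.projective_of_free (Module.Basis.singleton (PUnit : Type) R)

/-- Multiplication on the right by `r`, as a morphism in `ModuleCat R`. -/
def hatMul (r : R) : ModuleCat.of R R ⟶ ModuleCat.of R R :=
  ModuleCat.ofHom (LinearMap.toSpanSingleton R R r)

/-- The start of a projective resolution of `R ⧸ Rr`. -/
def hatComplex (r : R) : ChainComplex (ModuleCat R) ℕ :=
  ChainComplex.mk' (ModuleCat.of R R) (ModuleCat.of R R) (hatMul r)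
    (fun f => ⟨_, Projective.d f, by
      unfold Projective.d; erw [Category.assoc, kernel.condition, Limits.comp_zero]⟩)

/-- The carrier of degree 1 of `hatComplex` is (definitionally) `R`. -/
abbrev hatToR (r : R) (x : (hatComplex r).X 1) : R := x

lemma hatComplex_d_1_0 (r : R) : (hatComplex r).d 1 0 = hatMul r := by
  simp [hatComplex]

lemma hatComplex_exactAt_succ (r : R) (n : ℕ) :
    (hatComplex r).ExactAt (n + 1) := by
  rw [HomologicalComplex.exactAt_iff' _ (n + 1 + 1) (n + 1) n (by simp) (by simp)]
  dsimp [hatComplex, HomologicalComplex.sc', HomologicalComplex.shortComplexFunctor',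
      ChainComplex.mk', ChainComplex.mk]
  match n with
  | 0 => apply CategoryTheory.exact_d_f
  | n + 1 =>
    simp only [ChainComplex.of.d, dite_true, eqToHom_refl, Category.id_comp]
    apply CategoryTheory.exact_d_f

instance hatComplex_projective (r : R) (n : ℕ) : Projective ((hatComplex r).X n) := by
  obtain (_ | _ | _ | n) := n
  · exact hatProjRR
  · exact hatProjRR
  · apply Projective.projective_over
  · apply Projective.projective_over

lemma hatMul_comp_mkQ' (r : R) :
    (Submodule.mkQ (Ideal.span ({r} : Set R))).comp (LinearMap.toSpanSingleton R R r) = 0 := by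
  apply LinearMap.ext
  intro s
  show Submodule.mkQ _ (s • r) = 0
  rw [Submodule.mkQ_apply, Submodule.Quotient.mk_eq_zero]
  exact Submodule.smul_mem _ s (Submodule.subset_span rfl)

/-- The quotient map `R → R ⧸ Rr` as a morphism in `ModuleCat R`. -/
def hatMkQ (r : R) : ModuleCat.of R R ⟶ ModuleCat.of R (R ⧸ Ideal.span ({r} : Set R)) :=
  ModuleCat.ofHom (Submodule.mkQ (Ideal.span ({r} : Set R)))

lemma hatMul_comp_mkQ (r : R) : hatMul r ≫ hatMkQ r = 0 :=
  ModuleCat.hom_ext (hatMul_comp_mkQ' r)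

/-- The projective resolution of `R ⧸ Rr` starting `⋯ → R → R → R ⧸ Rr → 0`. -/
def hatResolution (r : R) :
    ProjectiveResolution (ModuleCat.of R (R ⧸ Ideal.span ({r} : Set R))) where
  complex := hatComplex r
  π := (ChainComplex.toSingle₀Equiv _ _).symm ⟨hatMkQ r, by
        rw [hatComplex_d_1_0]; exact hatMul_comp_mkQ r⟩
  quasiIso := ⟨fun n => by
    cases n with
    | zero =>
      rw [ChainComplex.quasiIsoAt₀_iff, ShortComplex.quasiIso_iff_of_zeros']
      · refine (ShortComplex.exact_and_epi_g_iff_of_iso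
          (S₂ := ShortComplex.mk (hatMul r) (hatMkQ r) (hatMul_comp_mkQ r)) ?_).2 ⟨?_, ?_⟩
        · exact ShortComplex.isoMk (Iso.refl _) (Iso.refl _) (Iso.refl _)
            (by simp [hatComplex_d_1_0]; rfl) (by simp [ChainComplex.toSingle₀Equiv_symm_apply_f_zero]; rfl)
        · rw [ShortComplex.moduleCat_exact_iff_range_eq_ker]
          show LinearMap.range (LinearMap.toSpanSingleton R R r)
            = LinearMap.ker (Submodule.mkQ _)
          rw [← LinearMap.span_singleton_eq_range, Submodule.ker_mkQ]
        · exact (ModuleCat.epi_iff_surjective (hatMkQ r)).2 (Submodule.mkQ_surjective _)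
      all_goals rfl
    | succ n =>
      rw [quasiIsoAt_iff_exactAt']
      · apply hatComplex_exactAt_succ
      · apply ChainComplex.exactAt_succ_single_obj⟩

lemma hatComplex_exact_one (r : R) (s : R) (hs : s * r = 0) :
    ∃ y : (hatComplex r).X 2, (hatComplex r).d 2 1 y = (s : R) := by
  have h := hatComplex_exactAt_succ r 0
  rw [HomologicalComplex.exactAt_iff' _ 2 1 0 (by simp) (by simp)] at h
  rw [ShortComplex.moduleCat_exact_iff] at h
  exact h s (by
    show ((hatComplex r).d 1 0) s = 0
    rw [hatComplex_d_1_0]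
    show s • r = 0
    rwa [smul_eq_mul])

lemma hatComplex_d21_comp (r : R) : (hatComplex r).d 2 1 ≫ hatMul r = 0 := by
  rw [← hatComplex_d_1_0]
  exact (hatComplex r).d_comp_d 2 1 0

lemma hatComplex_d21_mul (r : R) (y : (hatComplex r).X 2) :
    hatToR r ((hatComplex r).d 2 1 y) * r = 0 :=
  ConcreteCategory.congr_hom (hatComplex_d21_comp r) y

lemma subsingleton_of_isZero {X : ModuleCat ℤ} (h : IsZero X) : Subsingleton X := by
  have e : (𝟙 X : X ⟶ X) = 0 := h.eq_of_src _ _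
  refine ⟨fun a b => ?_⟩
  have ha : (𝟙 X : X ⟶ X) a = (0 : X ⟶ X) a := by rw [e]
  have hb : (𝟙 X : X ⟶ X) b = (0 : X ⟶ X) b := by rw [e]
  simpa using ha.trans hb.symm

end HattoriAux

/-- **Hattori.** A left `R`-module `M` is divisible (in Hattori's sense) if and only if
`Ext¹_R(R/Rr, M) = 0` for all `r ∈ R`. -/
theorem hattori_divisible_iff_ext_vanishes (R M : Type) [Ring R] [AddCommGroup M]
    [Module R M] :
    IsHattoriDivisible R M ↔
      ∀ r : R,
        Subsingleton
          (((Ext ℤ (ModuleCat R) 1).obj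
              (Opposite.op (ModuleCat.of R (R ⧸ Ideal.span ({r} : Set R))))).obj
            (ModuleCat.of R M)) := by
  classical
  have key : ∀ r : R,
      (Subsingleton
          (((Ext ℤ (ModuleCat R) 1).obj
              (Opposite.op (ModuleCat.of R (R ⧸ Ideal.span ({r} : Set R))))).obj
            (ModuleCat.of R M)))
        ↔ ((hatComplex r).linearYonedaObj ℤ (ModuleCat.of R M)).ExactAt 1 := by
    intro r
    rw [HomologicalComplex.exactAt_iff_isZero_homology]
    constructor
    · intro hs
      refine Limits.IsZero.of_iso ?_ ((hatResolution r).isoExt 1 (ModuleCat.of R M)).symm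
      exact ModuleCat.isZero_of_subsingleton _
    · intro hz
      exact subsingleton_of_isZero
        (Limits.IsZero.of_iso hz ((hatResolution r).isoExt 1 (ModuleCat.of R M)))
  have main : ∀ r : R,
      ((hatComplex r).linearYonedaObj ℤ (ModuleCat.of R M)).ExactAt 1 ↔
        ∀ m : M, (∀ s : R, s * r = 0 → s • m = 0) → ∃ m' : M, m = r • m' := by
    intro r
    rw [HomologicalComplex.exactAt_iff' _ 0 1 2 (by simp) (by simp),
      ShortComplex.moduleCat_exact_iff]
    constructor
    · intro hex m hm
      -- the map `R → M`, `s ↦ s • m`, as an element of degree 1 of the Hom complex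
      let g₀ : (hatComplex r).X 1 ⟶ ModuleCat.of R M :=
        ModuleCat.ofHom (LinearMap.toSpanSingleton R M m)
      have hcomp0 : (hatComplex r).d 2 1 ≫ g₀ = 0 := by
        apply ModuleCat.hom_ext
        apply LinearMap.ext
        intro y
        show (hatToR r ((hatComplex r).d 2 1 y)) • m = (0 : M)
        exact hm _ (hatComplex_d21_mul r y)
      obtain ⟨h, hh⟩ := hex g₀ hcomp0
      let hl : R →ₗ[R] M := (h : (hatComplex r).X 0 ⟶ ModuleCat.of R M).hom
      have hcomp : (hatComplex r).d 1 0 ≫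
          (h : (hatComplex r).X 0 ⟶ ModuleCat.of R M) = g₀ := hh
      rw [hatComplex_d_1_0] at hcomp
      have heval : ∀ s : R, hl (s * r) = s • m := fun s => ConcreteCategory.congr_hom hcomp s
      refine ⟨hl 1, ?_⟩
      have h1 := heval 1
      rw [one_mul, one_smul] at h1
      calc m = hl r := h1.symm
        _ = hl (r • (1 : R)) := by rw [smul_eq_mul, mul_one]
        _ = r • hl 1 := map_smul hl r 1
    · intro hdiv g hg
      let gm : (hatComplex r).X 1 ⟶ ModuleCat.of R M := g
      let gl : R →ₗ[R] M := gm.hom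
      set m : M := gl 1 with hmdef
      have hcomp : (hatComplex r).d 2 1 ≫ gm = 0 := hg
      have hm : ∀ s : R, s * r = 0 → s • m = 0 := by
        intro s hs
        obtain ⟨y, hy⟩ := hatComplex_exact_one r s hs
        have h0 : gm ((hatComplex r).d 2 1 y) = 0 := ConcreteCategory.congr_hom hcomp y
        rw [hy] at h0
        have h0' : gl s = 0 := h0
        calc s • m = s • gl 1 := by rw [hmdef]
          _ = gl (s * 1) := (map_smul gl s 1).symm
          _ = gl s := by rw [mul_one]
          _ = 0 := h0'
      obtain ⟨m', hm'⟩ := hdiv m hm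
      have lem : (LinearMap.toSpanSingleton R M m').comp (LinearMap.toSpanSingleton R R r)
          = gl := by
        apply LinearMap.ext
        intro s
        show (s • r) • m' = gl s
        rw [smul_eq_mul, mul_smul, ← hm', hmdef, ← map_smul, smul_eq_mul, mul_one]
      refine ⟨(ModuleCat.ofHom (LinearMap.toSpanSingleton R M m')
        : (hatComplex r).X 0 ⟶ ModuleCat.of R M), ?_⟩
      have goal : (hatComplex r).d 1 0 ≫
          (ModuleCat.ofHom (LinearMap.toSpanSingleton R M m')
            : (hatComplex r).X 0 ⟶ ModuleCat.of R M) = gm := by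
        rw [hatComplex_d_1_0]
        exact ModuleCat.hom_ext lem
      exact goal
  constructor
  · intro hdiv r
    exact (key r).2 ((main r).2 (fun m hm => hdiv r m hm))
  · intro h r m hm
    exact (main r).1 ((key r).1 (h r)) m hm
end

section
/- If the class of torsion-free left R-modules is closed under arbitrary direct products, then R is right P-coherent, i.e., the right annihilator of every element of R is a finitely generated right ideal. -/
/-- The right annihilator `𝔯(r) = {s : r * s = 0}` of `r`, as a right ideal of `R`
(i.e. an `Rᵐᵒᵖ`-submodule of `R`). -/
def rightAnnihilator (R : Type) [Ring R] (r : R) : Submodule Rᵐᵒᵖ R where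
  carrier := {s : R | r * s = 0}
  add_mem' := by intro a b ha hb; simp only [Set.mem_setOf_eq] at *; rw [mul_add, ha, hb, add_zero]
  zero_mem' := by simp
  smul_mem' := by
    intro c x hx
    simp only [Set.mem_setOf_eq, MulOpposite.smul_eq_mul_unop] at *
    rw [← mul_assoc, hx, zero_mul]

/-- Any ring is Hattori torsion-free as a left module over itself. -/
lemma isHattoriTorsionFree_self (R : Type) [Ring R] : IsHattoriTorsionFree R R := by
  intro r m hm
  apply AddSubgroup.subset_closure
  exact ⟨m, 1, by simpa using hm, by simp⟩

/-- If the class of torsion-free left `R`-modules is closed under arbitrary direct products,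
then `R` is right P-coherent: every right annihilator `𝔯(r)` is a finitely generated right
ideal. -/
theorem pCoherent_of_torsionFree_closed_under_products (R : Type) [Ring R]
    (h : ∀ (ι : Type) (M : ι → Type) (_ : ∀ i, AddCommGroup (M i))
      (_ : ∀ i, Module R (M i)),
      (∀ i, IsHattoriTorsionFree R (M i)) → IsHattoriTorsionFree R (∀ i, M i)) :
    ∀ r : R, (rightAnnihilator R r).FG := by
  classical
  intro r
  set I := {s : R // r * s = 0} with hI
  have htf : IsHattoriTorsionFree R (I → R) :=
    h I (fun _ => R) (fun _ => inferInstance) (fun _ => inferInstance)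
      (fun _ => isHattoriTorsionFree_self R)
  set m : I → R := fun i => i.val with hm
  have hrm : r • m = 0 := by
    funext i
    simp [hm, i.prop]
  have hmem := htf r m hrm
  -- key invariant preserved by the closure
  have key : ∀ x ∈ AddSubgroup.closure
      {x : I → R | ∃ (s : R) (y : I → R), r * s = 0 ∧ x = s • y},
      ∃ F : Finset R, (∀ s ∈ F, r * s = 0) ∧
        ∀ i : I, x i ∈ Submodule.span Rᵐᵒᵖ (F : Set R) := by
    intro x hx
    induction hx using AddSubgroup.closure_induction with
    | mem z hz =>
        obtain ⟨s, y, hrs, rfl⟩ := hz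
        refine ⟨{s}, by simpa using hrs, fun i => ?_⟩
        have : (s • y) i = MulOpposite.op (y i) • s := by
          simp [mul_comm]
        rw [this]
        exact Submodule.smul_mem _ _ (Submodule.subset_span (by simp))
    | zero => exact ⟨∅, by simp, fun i => by simp⟩
    | add a b _ _ ha hb =>
        obtain ⟨F₁, hF₁, hi₁⟩ := ha
        obtain ⟨F₂, hF₂, hi₂⟩ := hb
        refine ⟨F₁ ∪ F₂, ?_, fun i => ?_⟩
        · intro s hs
          rcases Finset.mem_union.mp hs with hs | hs
          · exact hF₁ s hs
          · exact hF₂ s hs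
        · have h1 : a i ∈ Submodule.span Rᵐᵒᵖ ((F₁ ∪ F₂ : Finset R) : Set R) :=
            Submodule.span_mono (fun z hz => Finset.mem_union_left _ hz) (hi₁ i)
          have h2 : b i ∈ Submodule.span Rᵐᵒᵖ ((F₁ ∪ F₂ : Finset R) : Set R) :=
            Submodule.span_mono (fun z hz => Finset.mem_union_right _ hz) (hi₂ i)
          simpa using Submodule.add_mem _ h1 h2
    | neg a _ ha =>
        obtain ⟨F, hF, hi⟩ := ha
        exact ⟨F, hF, fun i => by simpa using Submodule.neg_mem _ (hi i)⟩
  obtain ⟨F, hF, hi⟩ := key m hmem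
  refine ⟨F, le_antisymm ?_ ?_⟩
  · rw [Submodule.span_le]
    intro s hs
    exact hF s hs
  · intro s hs
    exact hi ⟨s, hs⟩
end

section
/- Over any ring, every ℵ₁-projective module (a module all of whose countably generated submodules are projective) is flat. -/
open MulOpposite

/-- A submodule is countably generated if it is the span of a countable set. -/
def CountablyGenerated (R : Type) {M : Type} [Ring R] [AddCommGroup M] [Module R M]
    (A : Submodule R M) : Prop :=
  ∃ S : Set M, S.Countable ∧ Submodule.span R S = A

/-- A left `R`-module `M` is flat: for every injective map `N → N'` of right `R`-modules, the
induced map `N ⊗_R M → N' ⊗_R M` is injective. -/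
def IsCFlat (R : Type) [Ring R] (M : Type) [AddCommGroup M] [Module R M] : Prop :=
  ∀ (N N' : ModuleCat Rᵐᵒᵖ) (f : ↥N →ₗ[Rᵐᵒᵖ] ↥N'),
    Function.Injective f → Function.Injective (ctmapLeft R f M)


section Proof

open FreeAbelianGroup

variable {R : Type} [Ring R]
variable {N N' : Type} [AddCommGroup N] [Module Rᵐᵒᵖ N] [AddCommGroup N'] [Module Rᵐᵒᵖ N']
variable {M M' M'' : Type} [AddCommGroup M] [Module R M] [AddCommGroup M'] [Module R M']
  [AddCommGroup M''] [Module R M'']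

theorem CTensor.induction_on {P : CTensor R N M → Prop} (x : CTensor R N M)
    (zero : P 0) (tmul : ∀ n m, P (ctmul R N M n m))
    (neg : ∀ x, P x → P (-x)) (add : ∀ x y, P x → P y → P (x + y)) : P x := by
  obtain ⟨y, rfl⟩ := QuotientAddGroup.mk'_surjective (tensorRels R N M) x
  induction y using FreeAbelianGroup.induction_on with
  | zero => exact zero
  | of p => exact tmul p.1 p.2
  | neg p hp => exact neg _ hp
  | add y z hy hz => exact add _ _ hy hz

@[simp] theorem ctmapLeft_ctmul (f : N →ₗ[Rᵐᵒᵖ] N') (n : N) (m : M) :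
    ctmapLeft R f M (ctmul R N M n m) = ctmul R N' M (f n) m :=
  ctlift_ctmul _ _ _ _ _ _ _ _ _

@[simp] theorem ctmapRight_ctmul (g : M →ₗ[R] M') (n : N) (m : M) :
    ctmapRight R N g (ctmul R N M n m) = ctmul R N M' n (g m) :=
  ctlift_ctmul _ _ _ _ _ _ _ _ _

theorem ctmapRight_comp (g : M' →ₗ[R] M'') (g' : M →ₗ[R] M') (x : CTensor R N M) :
    ctmapRight R N g (ctmapRight R N g' x) = ctmapRight R N (g ∘ₗ g') x := by
  induction x using CTensor.induction_on with
  | zero => simp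
  | tmul n m => simp
  | neg x hx => simp [hx]
  | add x y hx hy => simp [hx, hy]

theorem ctmapRight_id (x : CTensor R N M) : ctmapRight R N (LinearMap.id : M →ₗ[R] M) x = x := by
  induction x using CTensor.induction_on with
  | zero => simp
  | tmul n m => simp
  | neg x hx => simp [hx]
  | add x y hx hy => simp [hx, hy]

theorem ctmapLeft_ctmapRight_comm (f : N →ₗ[Rᵐᵒᵖ] N') (g : M →ₗ[R] M') (x : CTensor R N M) :
    ctmapLeft R f M' (ctmapRight R N g x) = ctmapRight R N' g (ctmapLeft R f M x) := by
  induction x using CTensor.induction_on with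
  | zero => simp
  | tmul n m => simp
  | neg x hx => simp [hx]
  | add x y hx hy => simp [hx, hy]

/-! ### Free modules are flat -/

variable (R N) in
noncomputable def ctToFinsupp (X : Type) : CTensor R N (X →₀ R) →+ (X →₀ N) :=
  ctlift R N (X →₀ R) (fun n p => p.sum fun x r => Finsupp.single x (op r • n))
    (fun n n' p => by
      simp only [smul_add, Finsupp.single_add]
      exact Finsupp.sum_add)
    (fun n p p' => by
      refine Finsupp.sum_add_index' (fun x => ?_) (fun x r r' => ?_)
      · simp
      · rw [op_add, add_smul, Finsupp.single_add])
    (fun r n p => by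
      rw [Finsupp.sum_smul_index (fun x => by simp)]
      congr 1
      funext x s
      rw [smul_smul, ← op_mul])

variable (R N) in
noncomputable def finsuppToCt (X : Type) : (X →₀ N) →+ CTensor R N (X →₀ R) :=
  Finsupp.liftAddHom fun x =>
    AddMonoidHom.mk' (fun n => ctmul R N (X →₀ R) n (Finsupp.single x 1))
      (fun n n' => ctmul_add_left n n' _)

@[simp] theorem ctToFinsupp_ctmul (X : Type) (n : N) (p : X →₀ R) :
    ctToFinsupp R N X (ctmul R N (X →₀ R) n p) = p.sum fun x r => Finsupp.single x (op r • n) :=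
  ctlift_ctmul _ _ _ _ _ _ _ _ _

theorem finsuppToCt_ctToFinsupp (X : Type) (z : CTensor R N (X →₀ R)) :
    finsuppToCt R N X (ctToFinsupp R N X z) = z := by
  induction z using CTensor.induction_on with
  | zero => simp
  | neg x hx => simp [hx]
  | add x y hx hy => simp [hx, hy]
  | tmul n p =>
    rw [ctToFinsupp_ctmul, map_finsuppSum]
    simp only [finsuppToCt, Finsupp.liftAddHom_apply_single, AddMonoidHom.mk'_apply]
    have h1 : ∀ (x : X) (r : R), ctmul R N (X →₀ R) (op r • n) (Finsupp.single x 1)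
        = ctmul R N (X →₀ R) n (Finsupp.single x r) := by
      intro x r
      rw [ctmul_smul, Finsupp.smul_single', mul_one]
    simp only [h1]
    have h2 := (map_finsuppSum (AddMonoidHom.mk' (fun q => ctmul R N (X →₀ R) n q)
        (fun q q' => ctmul_add_right n q q')) p
        (fun x r => Finsupp.single x r)).symm
    simpa [Finsupp.sum_single] using h2

theorem ctToFinsupp_natural (X : Type) (f : N →ₗ[Rᵐᵒᵖ] N') (z : CTensor R N (X →₀ R)) :
    ctToFinsupp R N' X (ctmapLeft R f (X →₀ R) z)
      = Finsupp.mapRange.addMonoidHom f.toAddMonoidHom (ctToFinsupp R N X z) := by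
  induction z using CTensor.induction_on with
  | zero => simp
  | neg x hx => simp only [map_neg, hx]
  | add x y hx hy => simp only [map_add, hx, hy]
  | tmul n p =>
    rw [ctmapLeft_ctmul, ctToFinsupp_ctmul, ctToFinsupp_ctmul, map_finsuppSum]
    congr 1
    funext x r
    simp [Finsupp.mapRange_single]

theorem ctToFinsupp_injective (X : Type) :
    Function.Injective (ctToFinsupp R N X) :=
  Function.LeftInverse.injective (finsuppToCt_ctToFinsupp X)

theorem ctmapLeft_free_injective (f : N →ₗ[Rᵐᵒᵖ] N') (hf : Function.Injective f) (X : Type) :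
    Function.Injective (ctmapLeft R f (X →₀ R)) := by
  intro z z' h
  have h2 := congrArg (ctToFinsupp R N' X) h
  rw [ctToFinsupp_natural, ctToFinsupp_natural] at h2
  have h3 : ctToFinsupp R N X z = ctToFinsupp R N X z' := by
    ext x
    have := congrFun (congrArg DFunLike.coe h2) x
    simpa using hf this
  exact ctToFinsupp_injective X h3

theorem ctmapLeft_injective_of_projective (P : Type) [AddCommGroup P] [Module R P]
    (hP : Module.Projective R P) (f : N →ₗ[Rᵐᵒᵖ] N') (hf : Function.Injective f) :
    Function.Injective (ctmapLeft R f P) := by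
  obtain ⟨s, hs⟩ := hP.out
  have hretract : ∀ w : CTensor R N P,
      ctmapRight R N (Finsupp.linearCombination R (id : P → P)) (ctmapRight R N s w) = w := by
    intro w
    rw [ctmapRight_comp]
    have : (Finsupp.linearCombination R (id : P → P)) ∘ₗ s = LinearMap.id :=
      LinearMap.ext fun p => hs p
    rw [this, ctmapRight_id]
  intro z z' h
  have h1 : ctmapLeft R f (P →₀ R) (ctmapRight R N s z)
      = ctmapLeft R f (P →₀ R) (ctmapRight R N s z') := by
    rw [ctmapLeft_ctmapRight_comm, ctmapLeft_ctmapRight_comm, h]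
  have h2 := ctmapLeft_free_injective f hf P h1
  rw [← hretract z, ← hretract z', h2]

/-! ### Reduction to finitely generated submodules -/

theorem ctmapRight_mk (g : M →ₗ[R] M') (w : FreeAbelianGroup (N × M)) :
    ctmapRight R N g (QuotientAddGroup.mk w)
      = QuotientAddGroup.mk (FreeAbelianGroup.map (Prod.map id g) w) := by
  induction w using FreeAbelianGroup.induction_on with
  | zero => rw [map_zero]; rfl
  | of p => rw [FreeAbelianGroup.map_of_apply]; exact ctmapRight_ctmul g p.1 p.2
  | neg p hp =>
    rw [map_neg, FreeAbelianGroup.map_of_apply]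
    show ctmapRight R N g (-(QuotientAddGroup.mk (FreeAbelianGroup.of p))) = _
    rw [map_neg]
    rw [show (QuotientAddGroup.mk (FreeAbelianGroup.of p) : CTensor R N M)
      = ctmul R N M p.1 p.2 from rfl, ctmapRight_ctmul]
    rfl
  | add y z hy hz =>
    show ctmapRight R N g (QuotientAddGroup.mk y + QuotientAddGroup.mk z) = _
    rw [map_add, hy, hz, map_add]
    rfl

theorem freeMap_subtype_injective (B : Submodule R M) :
    Function.Injective
      (FreeAbelianGroup.map (Prod.map (id : N' → N') B.subtype)) := by
  classical
  set ρ : N' × M → N' × B := fun p => (p.1, if h : p.2 ∈ B then (⟨p.2, h⟩ : B) else 0) with hρ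
  have hcomp : ρ ∘ Prod.map (id : N' → N') B.subtype = id := by
    funext p
    simp [hρ, Prod.map]
  intro a b h
  have := congrArg (FreeAbelianGroup.map ρ) h
  rwa [← FreeAbelianGroup.map_comp_apply, ← FreeAbelianGroup.map_comp_apply, hcomp,
    FreeAbelianGroup.map_id_apply, FreeAbelianGroup.map_id_apply] at this

/-- Every element of the relation subgroup over `M` lifts to the relation subgroup over
a suitable finitely generated submodule. -/
theorem tensorRels_lift {u : FreeAbelianGroup (N' × M)} (hu : u ∈ tensorRels R N' M) :
    ∃ t : Finset M, ∀ B : Submodule R M, ↑t ⊆ (B : Set M) →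
      ∃ u' ∈ tensorRels R N' (↥B),
        FreeAbelianGroup.map (Prod.map (id : N' → N') B.subtype) u' = u := by
  classical
  refine AddSubgroup.closure_induction ?_ ?_ ?_ ?_ hu
  · rintro x (⟨n, n', m, rfl⟩ | ⟨n, m, m', rfl⟩ | ⟨r, n, m, rfl⟩)
    · refine ⟨{m}, fun B hB => ?_⟩
      have hm : m ∈ B := hB (by simp)
      refine ⟨FreeAbelianGroup.of (n + n', (⟨m, hm⟩ : B)) -
        FreeAbelianGroup.of (n, (⟨m, hm⟩ : B)) - FreeAbelianGroup.of (n', (⟨m, hm⟩ : B)),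
        AddSubgroup.subset_closure (Or.inl ⟨n, n', ⟨m, hm⟩, rfl⟩), ?_⟩
      simp [FreeAbelianGroup.map_of_apply, Prod.map]
    · refine ⟨{m, m'}, fun B hB => ?_⟩
      have hm : m ∈ B := hB (by simp)
      have hm' : m' ∈ B := hB (by simp)
      refine ⟨FreeAbelianGroup.of (n, (⟨m, hm⟩ : B) + ⟨m', hm'⟩) -
        FreeAbelianGroup.of (n, (⟨m, hm⟩ : B)) - FreeAbelianGroup.of (n, (⟨m', hm'⟩ : B)),
        AddSubgroup.subset_closure (Or.inr (Or.inl ⟨n, ⟨m, hm⟩, ⟨m', hm'⟩, rfl⟩)), ?_⟩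
      simp [FreeAbelianGroup.map_of_apply, Prod.map]
    · refine ⟨{m}, fun B hB => ?_⟩
      have hm : m ∈ B := hB (by simp)
      refine ⟨FreeAbelianGroup.of (op r • n, (⟨m, hm⟩ : B)) -
        FreeAbelianGroup.of (n, r • (⟨m, hm⟩ : B)),
        AddSubgroup.subset_closure (Or.inr (Or.inr ⟨r, n, ⟨m, hm⟩, rfl⟩)), ?_⟩
      simp [FreeAbelianGroup.map_of_apply, Prod.map]
  · exact ⟨∅, fun B _ => ⟨0, zero_mem _, map_zero _⟩⟩
  · rintro x y _ _ ⟨t₁, h₁⟩ ⟨t₂, h₂⟩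
    refine ⟨t₁ ∪ t₂, fun B hB => ?_⟩
    obtain ⟨u₁, hu₁, hmap₁⟩ := h₁ B (fun m hm => hB (Finset.mem_union_left _ hm))
    obtain ⟨u₂, hu₂, hmap₂⟩ := h₂ B (fun m hm => hB (Finset.mem_union_right _ hm))
    exact ⟨u₁ + u₂, add_mem hu₁ hu₂, by rw [map_add, hmap₁, hmap₂]⟩
  · rintro x _ ⟨t, ht⟩
    refine ⟨t, fun B hB => ?_⟩
    obtain ⟨u', hu', hmap⟩ := ht B hB
    exact ⟨-u', neg_mem hu', by rw [map_neg, hmap]⟩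

theorem exists_enlarge (A : Submodule R M) (z : CTensor R N' (↥A))
    (hz : ctmapRight R N' A.subtype z = 0) :
    ∃ t : Finset M,
      ctmapRight R N' (Submodule.inclusion
        (le_sup_left : A ≤ A ⊔ Submodule.span R (↑t : Set M))) z = 0 := by
  obtain ⟨w, rfl⟩ := QuotientAddGroup.mk'_surjective (tensorRels R N' (↥A)) z
  rw [QuotientAddGroup.mk'_apply, ctmapRight_mk, QuotientAddGroup.eq_zero_iff] at hz
  obtain ⟨t, ht⟩ := tensorRels_lift hz
  refine ⟨t, ?_⟩
  set B := A ⊔ Submodule.span R (↑t : Set M) with hBdef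
  have hB : ↑t ⊆ (B : Set M) := fun m hm =>
    (le_sup_right : Submodule.span R (↑t : Set M) ≤ B) (Submodule.subset_span hm)
  obtain ⟨u', hu', hmap⟩ := ht B hB
  rw [QuotientAddGroup.mk'_apply, ctmapRight_mk, QuotientAddGroup.eq_zero_iff]
  have key : FreeAbelianGroup.map (Prod.map (id : N' → N')
      (Submodule.inclusion (le_sup_left : A ≤ B))) w = u' := by
    apply freeMap_subtype_injective B
    rw [hmap, ← FreeAbelianGroup.map_comp_apply]
    congr 1
  rw [key]
  exact hu'

theorem exists_fg_rep (x : CTensor R N M) :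
    ∃ A : Submodule R M, A.FG ∧ ∃ x₀ : CTensor R N (↥A),
      ctmapRight R N A.subtype x₀ = x := by
  induction x using CTensor.induction_on with
  | zero => exact ⟨⊥, Submodule.fg_bot, 0, map_zero _⟩
  | tmul n m =>
    refine ⟨Submodule.span R {m}, Submodule.fg_span_singleton m,
      ctmul R N _ n ⟨m, Submodule.mem_span_singleton_self m⟩, ?_⟩
    simp
  | neg x hx =>
    obtain ⟨A, hA, x₀, hx₀⟩ := hx
    exact ⟨A, hA, -x₀, by rw [map_neg, hx₀]⟩
  | add x y hx hy =>
    obtain ⟨A₁, hA₁, x₁, hx₁⟩ := hx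
    obtain ⟨A₂, hA₂, x₂, hx₂⟩ := hy
    refine ⟨A₁ ⊔ A₂, hA₁.sup hA₂,
      ctmapRight R N (Submodule.inclusion le_sup_left) x₁ +
        ctmapRight R N (Submodule.inclusion le_sup_right) x₂, ?_⟩
    rw [map_add, ctmapRight_comp, ctmapRight_comp]
    rw [Submodule.subtype_comp_inclusion, Submodule.subtype_comp_inclusion, hx₁, hx₂]

theorem fg_countablyGenerated {A : Submodule R M} (hA : A.FG) : CountablyGenerated R A := by
  obtain ⟨s, hs⟩ := hA
  exact ⟨↑s, s.countable_toSet, hs⟩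

end Proof

/-- Over any ring, every `ℵ₁`-projective module (every countably generated submodule is
projective) is flat. -/
theorem flat_of_aleph1Projective (R M : Type) [Ring R] [AddCommGroup M] [Module R M]
    (h : ∀ A : Submodule R M, CountablyGenerated R A → Module.Projective R ↥A) :
    IsCFlat R M := by
  intro N N' f hf
  rw [injective_iff_map_eq_zero]
  intro x hx
  obtain ⟨A, hAfg, x₀, rfl⟩ := exists_fg_rep x
  have h1 : ctmapRight R ↥N' A.subtype (ctmapLeft R f (↥A) x₀) = 0 := by
    rw [← ctmapLeft_ctmapRight_comm]
    exact hx
  obtain ⟨t, ht⟩ := exists_enlarge A (ctmapLeft R f (↥A) x₀) h1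
  set B := A ⊔ Submodule.span R (↑t : Set M) with hBdef
  have hBfg : B.FG := hAfg.sup (Submodule.fg_span t.finite_toSet)
  have hBproj : Module.Projective R ↥B := h B (fg_countablyGenerated hBfg)
  have hinj := ctmapLeft_injective_of_projective (↥B) hBproj f hf
  have h2 : ctmapLeft R f (↥B)
      (ctmapRight R ↥N (Submodule.inclusion (le_sup_left : A ≤ B)) x₀) = 0 := by
    rw [ctmapLeft_ctmapRight_comm]
    exact ht
  have h3 : ctmapRight R ↥N (Submodule.inclusion (le_sup_left : A ≤ B)) x₀ = 0 :=
    hinj (by rw [h2, map_zero])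
  rw [← Submodule.subtype_comp_inclusion A B le_sup_left, ← ctmapRight_comp, h3, map_zero]
end

section
/- If every countably generated left ideal of R is projective (R is left countably hereditary), then every projective left R-module is ℵ₁-projective, i.e., all its countably generated submodules are projective. -/
open Submodule Function

section Aux

variable {R : Type} [Ring R] {M : Type} [AddCommGroup M] [Module R M]

/-- countably generated as a module -/
def CGT (R : Type) [Ring R] (M : Type) [AddCommGroup M] [Module R M] : Prop :=
  ∃ S : Set M, S.Countable ∧ Submodule.span R S = ⊤

lemma cgt_of_span {N : Submodule R M} {S : Set M} (hc : S.Countable)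
    (hs : Submodule.span R S = N) : CGT R ↥N := by
  have hSN : S ⊆ ↑N := hs ▸ Submodule.subset_span
  refine ⟨N.subtype ⁻¹' S, hc.preimage Subtype.val_injective, ?_⟩
  apply Submodule.map_injective_of_injective
    (show Injective N.subtype from Subtype.val_injective)
  rw [Submodule.map_span, Submodule.map_top, Submodule.range_subtype]
  have himg : N.subtype '' (N.subtype ⁻¹' S) = S := by
    rw [Submodule.coe_subtype, Set.image_preimage_eq_inter_range, Subtype.range_coe]
    exact Set.inter_eq_self_of_subset_left hSN
  rw [himg, hs]

/-- filtering a finsupp, as a linear map -/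
def filterL (R : Type) [Ring R] (p : ℕ → Prop) [DecidablePred p] :
    (ℕ →₀ R) →ₗ[R] (ℕ →₀ R) where
  toFun f := f.filter p
  map_add' _ _ := Finsupp.filter_add
  map_smul' _ _ := Finsupp.filter_smul

lemma filterL_eq_zero {p : ℕ → Prop} [DecidablePred p] {f : ℕ →₀ R} :
    filterL R p f = 0 ↔ ∀ i, p i → f i = 0 := by
  constructor
  · intro h i hp
    have := DFunLike.congr_fun h i
    simpa [filterL, Finsupp.filter_apply, hp] using this
  · intro h
    ext i
    by_cases hp : p i <;> simp [filterL, Finsupp.filter_apply, hp, h]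

lemma exists_section {N : Type} [AddCommGroup N] [Module R N] (f : M →ₗ[R] N)
    (hp : Module.Projective R ↥(LinearMap.range f)) :
    ∃ σ : ↥(LinearMap.range f) →ₗ[R] M, ∀ y, f (σ y) = ↑y := by
  haveI := hp
  obtain ⟨σ, hσ⟩ := Module.projective_lifting_property f.rangeRestrict LinearMap.id
    f.surjective_rangeRestrict
  refine ⟨σ, fun y => ?_⟩
  have h1 := DFunLike.congr_fun hσ y
  have h2 : (f.rangeRestrict (σ y) : N) = ((LinearMap.id (R := R) y : ↥(LinearMap.range f)) : N) :=
    congrArg Subtype.val h1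
  simpa using h2



theorem coreFin (hR : ∀ I : Ideal R, CountablyGenerated R I → Module.Projective R ↥I) :
    ∀ (k : ℕ) (M : Type) (_ : AddCommGroup M) (_ : Module R M) (j : M →ₗ[R] (ℕ →₀ R)),
      Injective j → (∀ m i, k ≤ i → j m i = 0) → CGT R M → Module.Projective R M := by
  intro k
  induction k with
  | zero =>
    intro M _ _ j hinj hb _
    haveI hsub : Subsingleton M :=
      ⟨fun a b => hinj (by ext i; rw [hb a i (Nat.zero_le i), hb b i (Nat.zero_le i)])⟩
    rw [Module.projective_def']
    exact ⟨0, by ext m; exact Subsingleton.elim _ _⟩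
  | succ k ih =>
    intro M _ _ j hinj hb hcg
    classical
    set c : M →ₗ[R] R := (Finsupp.lapply k) ∘ₗ j with hcdef
    have hck : ∀ m, c m = j m k := fun m => rfl
    have hIcg : CountablyGenerated R (LinearMap.range c) := by
      obtain ⟨S, hSc, hSs⟩ := hcg
      exact ⟨c '' S, hSc.image c, by rw [Submodule.span_image, hSs, Submodule.map_top]⟩
    obtain ⟨σ, hσ⟩ := exists_section c (hR _ hIcg)
    set ρ : M →ₗ[R] M := LinearMap.id - σ ∘ₗ c.rangeRestrict with hρ
    have hρc : ∀ m, c (ρ m) = 0 := by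
      intro m
      have : c (σ (c.rangeRestrict m)) = c m := hσ _
      simp [hρ, this]
    set K := LinearMap.ker c with hK
    set π : M →ₗ[R] ↥K := LinearMap.codRestrict K ρ (fun m => hρc m) with hπ
    have hπid : ∀ x : ↥K, π ↑x = x := by
      intro x
      apply Subtype.ext
      have hcx : c.rangeRestrict ↑x = 0 := Subtype.ext (by simpa using x.2)
      show ρ ↑x = ↑x
      simp [hρ, hcx]
    have hKproj : Module.Projective R ↥K := by
      apply ih ↥K inferInstance inferInstance (j ∘ₗ K.subtype)
        (hinj.comp Subtype.val_injective)
      · intro x i hi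
        rcases eq_or_lt_of_le hi with h | h
        · subst h
          have hx : c ↑x = 0 := LinearMap.mem_ker.mp x.2
          rw [hck] at hx
          exact hx
        · exact hb _ i h
      · obtain ⟨S, hSc, hSs⟩ := hcg
        refine ⟨π '' S, hSc.image π, ?_⟩
        rw [Submodule.span_image, hSs, Submodule.map_top]
        exact LinearMap.range_eq_top.mpr (fun x => ⟨↑x, hπid x⟩)
    haveI := hKproj
    haveI := hR _ hIcg
    refine Module.Projective.of_split (M := (↥K) × ↥(LinearMap.range c))
      (π.prod c.rangeRestrict)
      (K.subtype ∘ₗ LinearMap.fst R ↥K ↥(LinearMap.range c) +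
        σ ∘ₗ LinearMap.snd R ↥K ↥(LinearMap.range c)) ?_
    ext m
    show ↑(π m) + σ (c.rangeRestrict m) = m
    show ρ m + σ (c.rangeRestrict m) = m
    simp [hρ]

theorem core (hR : ∀ I : Ideal R, CountablyGenerated R I → Module.Projective R ↥I)
    (M : Type) [AddCommGroup M] [Module R M] (j : M →ₗ[R] (ℕ →₀ R))
    (hinj : Injective j) (hcg : CGT R M) : Module.Projective R M := by
  classical
  -- the head filtration
  set H : ℕ → Submodule R M := fun k => LinearMap.ker ((filterL R (k ≤ ·)) ∘ₗ j) with hHdef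
  have memH : ∀ (k : ℕ) (x : M), x ∈ H k ↔ ∀ i, k ≤ i → j x i = 0 := by
    intro k x
    rw [hHdef, LinearMap.mem_ker]
    exact filterL_eq_zero
  have Hmono : Monotone H := by
    intro a b hab x hx
    rw [memH] at hx ⊢
    intro i hi
    exact hx i (le_trans hab hi)
  have Htop : ∀ x : M, ∃ k, x ∈ H k := by
    intro x
    obtain ⟨B, hB⟩ := Finset.exists_nat_subset_range (j x).support
    refine ⟨B, (memH B x).mpr fun i hi => ?_⟩
    by_contra hne
    have h1 : i ∈ (j x).support := Finsupp.mem_support_iff.mpr hne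
    have h2 := hB h1
    rw [Finset.mem_range] at h2
    omega
  have H0 : ∀ x : M, x ∈ H 0 → x = 0 := by
    intro x hx
    apply hinj
    rw [map_zero]
    ext i
    exact (memH 0 x).mp hx i (Nat.zero_le i)
  -- generators
  obtain ⟨S0, hS0c, hS0s⟩ := hcg
  obtain ⟨g, hg⟩ := (hS0c.insert 0).exists_eq_range (Set.insert_nonempty 0 S0)
  have hgtop : Submodule.span R (Set.range g) = ⊤ := by
    rw [← hg, Submodule.span_insert_zero, hS0s]
  set A : ℕ → Submodule R M := fun n => Submodule.span R (g '' Set.Iic n) with hAdef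
  have hAfg : ∀ n, (A n).FG := fun n => Submodule.fg_span ((Set.finite_Iic n).image g)
  have hAmono : Monotone A := fun a b hab =>
    Submodule.span_mono (Set.image_mono (Set.Iic_subset_Iic.2 hab))
  have hAtop : ∀ x : M, ∃ n, x ∈ A n := by
    intro x
    have hU : (⋃ n, g '' Set.Iic n) = Set.range g := by
      apply Set.Subset.antisymm
      · exact Set.iUnion_subset fun n => Set.image_subset_range g _
      · rintro x ⟨i, rfl⟩
        exact Set.mem_iUnion.mpr ⟨i, Set.mem_image_of_mem g (Set.mem_Iic.mpr le_rfl)⟩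
    have htop : (⨆ n, A n) = ⊤ := by
      rw [hAdef, ← Submodule.span_iUnion, hU, hgtop]
    have hx : x ∈ ⨆ n, A n := htop ▸ Submodule.mem_top
    exact (Submodule.mem_iSup_of_directed A hAmono.directed_le).mp hx
  -- support bound on each A n
  have hAbound : ∀ n, ∃ B : ℕ, ∀ x ∈ A n, ∀ i, B ≤ i → j x i = 0 := by
    intro n
    obtain ⟨B, hB⟩ := Finset.exists_nat_subset_range
      ((Finset.Iic n).biUnion fun i => (j (g i)).support)
    refine ⟨B, ?_⟩
    have hle : A n ≤ Submodule.comap j (Finsupp.supported R R ↑(Finset.range B)) := by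
      rw [hAdef, Submodule.span_le]
      rintro x ⟨i, hi, rfl⟩
      simp only [SetLike.mem_coe, Submodule.mem_comap, Finsupp.mem_supported]
      refine Set.Subset.trans ?_ (Finset.coe_subset.mpr hB)
      exact Finset.coe_subset.mpr
        (Finset.subset_biUnion_of_mem (fun i => (j (g i)).support)
          (Finset.mem_Iic.mpr (Set.mem_Iic.mp hi)))
    intro x hx i hi
    have hxs := hle hx
    rw [Submodule.mem_comap, Finsupp.mem_supported] at hxs
    by_contra hne
    have h1 : i ∈ (j x).support := Finsupp.mem_support_iff.mpr hne
    have h2 := hxs h1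
    simp only [Finset.coe_range, Set.mem_Iio] at h2
    omega
  -- each A n ⊓ H k is finitely generated
  have hfgAH : ∀ (k n : ℕ), (A n ⊓ H k).FG := by
    intro k n
    set θ : ↥(A n) →ₗ[R] (ℕ →₀ R) := (filterL R (k ≤ ·)) ∘ₗ (j ∘ₗ (A n).subtype) with hθdef
    obtain ⟨B, hB⟩ := hAbound n
    have hθproj : Module.Projective R ↥(LinearMap.range θ) := by
      refine coreFin hR B ↥(LinearMap.range θ) inferInstance inferInstance
        (LinearMap.range θ).subtype Subtype.val_injective ?_ ?_
      · rintro ⟨y, x, rfl⟩ i hi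
        show θ x i = 0
        rw [hθdef]
        show (Finsupp.filter (k ≤ ·) (j ↑x)) i = 0
        rw [Finsupp.filter_apply]
        have hz := hB ↑x x.2 i hi
        split <;> simp [hz]
      · have hfg : (LinearMap.range θ).FG := by
          rw [LinearMap.range_eq_map]
          exact Submodule.FG.map _ ((Submodule.fg_top (A n)).mpr (hAfg n))
        obtain ⟨T, hT⟩ := hfg
        exact cgt_of_span T.countable_toSet hT
    obtain ⟨σθ, hσθ⟩ := exists_section θ hθproj
    set ρθ : ↥(A n) →ₗ[R] ↥(A n) := LinearMap.id - σθ ∘ₗ θ.rangeRestrict with hρθdef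
    have hρθ0 : ∀ z, θ (ρθ z) = 0 := by
      intro z
      have h1 : θ (σθ (θ.rangeRestrict z)) = θ z := hσθ _
      show θ (z - σθ (θ.rangeRestrict z)) = 0
      rw [map_sub, h1, sub_self]
    have hrange : A n ⊓ H k = Submodule.map ((A n).subtype ∘ₗ ρθ) ⊤ := by
      apply le_antisymm
      · rintro x ⟨hxA, hxH⟩
        refine ⟨⟨x, hxA⟩, trivial, ?_⟩
        have hθx : θ ⟨x, hxA⟩ = 0 := LinearMap.mem_ker.mp hxH
        have hrr : θ.rangeRestrict ⟨x, hxA⟩ = 0 := Subtype.ext (by simpa using hθx)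
        have heq : ρθ ⟨x, hxA⟩ = ⟨x, hxA⟩ := by
          show (⟨x, hxA⟩ : ↥(A n)) - σθ (θ.rangeRestrict ⟨x, hxA⟩) = ⟨x, hxA⟩
          rw [hrr, map_zero, sub_zero]
        show ↑(ρθ ⟨x, hxA⟩) = x
        rw [heq]
      · rintro x ⟨z, -, rfl⟩
        exact Submodule.mem_inf.mpr ⟨(ρθ z).2, LinearMap.mem_ker.mpr (hρθ0 z)⟩
    rw [hrange]
    exact Submodule.FG.map _ ((Submodule.fg_top (A n)).mpr (hAfg n))
  -- each H k is countably generated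
  have hHcg : ∀ k, CGT R ↥(H k) := by
    intro k
    choose T hT using fun n => hfgAH k n
    refine cgt_of_span (N := H k) (S := ⋃ n, (T n : Set M))
      (Set.countable_iUnion fun n => (T n).countable_toSet) ?_
    rw [Submodule.span_iUnion]
    simp_rw [hT]
    apply le_antisymm (iSup_le fun n => inf_le_right)
    intro x hx
    obtain ⟨n, hn⟩ := hAtop x
    exact Submodule.mem_iSup_of_mem n (Submodule.mem_inf.mpr ⟨hn, hx⟩)
  -- splitting off each layer
  have hstep : ∀ k : ℕ, ∃ D : Submodule R M, Module.Projective R ↥D ∧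
      D ≤ H (k+1) ∧ (∀ x, x ∈ H k → x ∈ D → x = 0) ∧ H (k+1) = H k ⊔ D := by
    intro k
    set q : ↥(H (k+1)) →ₗ[R] R := (Finsupp.lapply k) ∘ₗ (j ∘ₗ (H (k+1)).subtype) with hqdef
    have hIcg : CountablyGenerated R (LinearMap.range q) := by
      obtain ⟨S, hSc, hSs⟩ := hHcg (k+1)
      exact ⟨q '' S, hSc.image _, by rw [Submodule.span_image, hSs, Submodule.map_top]⟩
    obtain ⟨σ, hσ⟩ := exists_section q (hR _ hIcg)
    set t : ↥(LinearMap.range q) →ₗ[R] M := (H (k+1)).subtype ∘ₗ σ with htdef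
    have hDle' : LinearMap.range t ≤ H (k+1) := by
      rintro x ⟨y, rfl⟩
      exact (σ y).2
    refine ⟨LinearMap.range t, ?_, hDle', ?_, ?_⟩
    · haveI := hR _ hIcg
      refine Module.Projective.of_split (M := ↥(LinearMap.range q))
        (q.rangeRestrict ∘ₗ Submodule.inclusion hDle') t.rangeRestrict ?_
      apply LinearMap.ext
      intro d
      apply Subtype.ext
      obtain ⟨y, hy⟩ := d.2
      have h1 : Submodule.inclusion hDle' d = σ y := Subtype.ext hy.symm
      have h2 : q.rangeRestrict (σ y) = y := Subtype.ext (hσ y)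
      calc (↑(t.rangeRestrict (q.rangeRestrict (Submodule.inclusion hDle' d))) : M)
          = t (q.rangeRestrict (Submodule.inclusion hDle' d)) := rfl
        _ = t y := by rw [h1, h2]
        _ = ↑d := hy
    · intro x hxH hxD
      obtain ⟨y, rfl⟩ := hxD
      have h1 : q (σ y) = ↑y := hσ y
      have h2 : j (t y) k = 0 := (memH k (t y)).mp hxH k le_rfl
      have h3 : (↑y : R) = 0 := by rw [← h1]; exact h2
      have h4 : y = 0 := Subtype.ext h3
      show t y = 0
      rw [h4, map_zero]
    · apply le_antisymm
      · intro x hx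
        set y0 := q.rangeRestrict (⟨x, hx⟩ : ↥(H (k+1))) with hy0
        set d := t y0 with hddef
        have hdD : d ∈ LinearMap.range t := ⟨y0, rfl⟩
        have hjd : j d k = j x k := hσ y0
        have hsub : x - d ∈ H k := by
          rw [memH]
          intro i hi
          rcases eq_or_lt_of_le hi with h | h
          · subst h
            rw [map_sub, Finsupp.sub_apply, hjd, sub_self]
          · have hx1 : j x i = 0 := (memH (k+1) x).mp hx i h
            have hx2 : j d i = 0 := (memH (k+1) d).mp (hDle' hdD) i h
            rw [map_sub, Finsupp.sub_apply, hx1, hx2, sub_self]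
        have hmem := Submodule.add_mem_sup hsub hdD
        simpa using hmem
      · exact sup_le (Hmono (Nat.le_succ k)) hDle'
  choose D hDproj hDle hDdisj hHsplit using hstep
  -- assembling
  set Φ : (Π₀ k, ↥(D k)) →ₗ[R] M := DFinsupp.lsum ℕ (fun k => (D k).subtype) with hΦdef
  have hΦsingle : ∀ (i : ℕ) (b : ↥(D i)), Φ (DFinsupp.single i b) = ↑b := by
    intro i b
    rw [hΦdef]
    exact DFinsupp.lsum_single _ _ _ _
  have hDleH : ∀ {i n : ℕ}, i < n → D i ≤ H n := fun {i n} h =>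
    le_trans (hDle i) (Hmono h)
  have hΦmem : ∀ (n : ℕ) (v : Π₀ k, ↥(D k)), (∀ k, n ≤ k → v k = 0) → Φ v ∈ H n := by
    intro n v
    induction v using DFinsupp.induction with
    | h0 => intro _; rw [map_zero]; exact Submodule.zero_mem _
    | ha i b f hfi hb ihf =>
      intro hbound
      have hi : i < n := by
        by_contra hcon
        push_neg at hcon
        have h1 := hbound i hcon
        rw [DFinsupp.add_apply, DFinsupp.single_eq_same, hfi, add_zero] at h1
        exact hb h1
      have hf : ∀ k, n ≤ k → f k = 0 := by
        intro k hk
        have h1 := hbound k hk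
        rwa [DFinsupp.add_apply, DFinsupp.single_eq_of_ne (by omega : k ≠ i), zero_add] at h1
      rw [map_add]
      refine Submodule.add_mem _ ?_ (ihf hf)
      rw [hΦsingle]
      exact hDleH hi b.2
  have hkey : ∀ (n : ℕ) (v : Π₀ k, ↥(D k)), (∀ k, n ≤ k → v k = 0) → Φ v = 0 → v = 0 := by
    intro n
    induction n with
    | zero =>
      intro v hv _
      ext k
      rw [hv k (Nat.zero_le k)]
      rfl
    | succ n ihn =>
      intro v hv hΦv
      have herase : ∀ k, n ≤ k → (v.erase n) k = 0 := by
        intro k hk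
        rcases eq_or_ne k n with rfl | hne
        · simp
        · rw [DFinsupp.erase_ne hne]
          exact hv k (by omega)
      have hsplit : Φ (v.erase n) + ↑(v n) = 0 := by
        rw [← hΦsingle n (v n), ← map_add, DFinsupp.erase_add_single]
        exact hΦv
      have hvnH : (↑(v n) : M) ∈ H n := by
        have h1 : (↑(v n) : M) = -Φ (v.erase n) := eq_neg_of_add_eq_zero_right hsplit
        rw [h1]
        exact Submodule.neg_mem _ (hΦmem n _ herase)
      have hvn0 : v n = 0 := Subtype.ext (hDdisj n _ hvnH (v n).2)
      have hv' : v = v.erase n := by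
        conv_lhs => rw [← DFinsupp.erase_add_single n v]
        rw [hvn0, DFinsupp.single_zero, add_zero]
      rw [hv']
      refine ihn _ herase ?_
      rw [← hv']
      exact hΦv
  have hΦinj : Injective Φ := by
    intro v w hvw
    have hz : Φ (v - w) = 0 := by rw [map_sub, hvw, sub_self]
    have hb : ∃ n, ∀ k, n ≤ k → (v - w) k = 0 := by
      obtain ⟨B, hB⟩ := Finset.exists_nat_subset_range (v - w).support
      refine ⟨B, fun k hk => ?_⟩
      by_contra hne
      have h1 : k ∈ (v - w).support := DFinsupp.mem_support_iff.mpr hne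
      have h2 := hB h1
      rw [Finset.mem_range] at h2
      omega
    obtain ⟨n, hn⟩ := hb
    have h0 := hkey n _ hn hz
    exact sub_eq_zero.mp h0
  have hΦsurj : Surjective Φ := by
    rw [← LinearMap.range_eq_top]
    have hDr : ∀ k, D k ≤ LinearMap.range Φ := by
      intro k x hx
      exact ⟨DFinsupp.single k ⟨x, hx⟩, hΦsingle k ⟨x, hx⟩⟩
    have hHr : ∀ n, H n ≤ LinearMap.range Φ := by
      intro n
      induction n with
      | zero => intro x hx; rw [H0 x hx]; exact Submodule.zero_mem _
      | succ n ihn =>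
        rw [hHsplit n]
        exact sup_le ihn (hDr n)
    rw [eq_top_iff]
    intro x _
    obtain ⟨k, hk⟩ := Htop x
    exact hHr k hk
  haveI : ∀ k, Module.Projective R ↥(D k) := hDproj
  exact Module.Projective.of_equiv (LinearEquiv.ofBijective Φ ⟨hΦinj, hΦsurj⟩)




/-- If every countably generated left ideal of `R` is projective (`R` is left countably
hereditary), then every projective left `R`-module is `ℵ₁`-projective: all its countably
generated submodules are projective. -/
theorem aleph1Projective_of_projective_of_countablyHereditary (R : Type) [Ring R]
    (hR : ∀ I : Ideal R, CountablyGenerated R I → Module.Projective R ↥I) :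
    ∀ (P : Type) (_ : AddCommGroup P) (_ : Module R P), Module.Projective R P →
      ∀ A : Submodule R P, CountablyGenerated R A → Module.Projective R ↥A := by
  intro P instG instM hproj A hA
  obtain ⟨SA, hSAc, hSAs⟩ := hA
  obtain ⟨s, hs⟩ := Module.projective_def.mp hproj
  have hsinj : Injective s := hs.injective
  set Y : Set P := ⋃ x ∈ SA, ↑(s x).support with hYdef
  have hYc : Y.Countable := hSAc.biUnion fun x _ => (s x).support.countable_toSet
  have hsub : ∀ a : ↥A, s ↑a ∈ Finsupp.supported R R Y := by
    intro a
    have hmem : (a : P) ∈ Submodule.span R SA := by rw [hSAs]; exact a.2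
    have hle : Submodule.span R SA ≤ (Finsupp.supported R R Y).comap s := by
      rw [Submodule.span_le]
      intro x hx
      simp only [SetLike.mem_coe, Submodule.mem_comap, Finsupp.mem_supported]
      rw [hYdef]
      exact Set.subset_iUnion₂ (s := fun x _ => ((s x).support : Set P)) x hx
    exact hle hmem
  haveI : Countable ↥Y := hYc.to_subtype
  obtain ⟨f, hf⟩ := exists_injective_nat ↥Y
  set e1 : ↥(Finsupp.supported R R Y) ≃ₗ[R] (↥Y →₀ R) := Finsupp.supportedEquivFinsupp Y
    with he1
  set j0 : ↥A →ₗ[R] ↥(Finsupp.supported R R Y) :=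
    (s ∘ₗ A.subtype).codRestrict (Finsupp.supported R R Y) hsub with hj0
  set jA : ↥A →ₗ[R] (ℕ →₀ R) := (Finsupp.lmapDomain R R f) ∘ₗ (e1.toLinearMap ∘ₗ j0)
    with hjA
  have hjinj : Injective jA := by
    have h1 : Injective (Finsupp.lmapDomain R R f : (↥Y →₀ R) →ₗ[R] (ℕ →₀ R)) :=
      Finsupp.mapDomain_injective hf
    have h3 : Injective j0 := by
      intro a b hab
      have hval : s ↑a = s ↑b := congrArg Subtype.val hab
      exact Subtype.ext (hsinj hval)
    intro a b hab
    apply h3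
    apply e1.injective
    apply h1
    exact hab
  exact core hR ↥A jA hjinj (cgt_of_span hSAc hSAs)

end Aux
end

section
/- A left countably hereditary ring with finite left uniform (Goldie) dimension is left noetherian. -/
open Submodule

/-- In a modular compactly generated complete lattice, a sequence each of whose terms is
disjoint from the supremum of the earlier terms is `iSupIndep`. -/
lemma auxIndep {α : Type*} [CompleteLattice α] [IsModularLattice α]
    [IsCompactlyGenerated α] (f : ℕ → α) (hb : ∀ n, f n ≠ ⊥)
    (h : ∀ n, Disjoint (f n) (⨆ i, ⨆ _ : i < n, f i)) : iSupIndep f := by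
  have hle : ∀ (n : ℕ) (t : Finset ℕ), (∀ i ∈ t, i < n) → t.sup f ≤ ⨆ i, ⨆ _ : i < n, f i := by
    intro n t ht
    refine Finset.sup_le fun j hj => ?_
    exact le_iSup₂ (f := fun i (_ : i < n) => f i) j (ht j hj)
  have key : ∀ m n, f m ≠ ⊥ → f m = f n → m < n → False := by
    intro m n hm hmn hlt
    have h1 : f m ≤ ⨆ i, ⨆ _ : i < n, f i :=
      le_iSup₂ (f := fun i (_ : i < n) => f i) m hlt
    have h2 : Disjoint (f n) (f m) := (h n).mono_right h1
    rw [← hmn] at h2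
    exact hm h2.eq_bot_of_self
  have injOn : Set.InjOn f {i | f i ≠ ⊥} := by
    intro m hm n hn hmn
    by_contra hne
    rcases lt_or_gt_of_ne hne with hlt | hlt
    · exact key m n hm hmn hlt
    · exact key n m hn hmn.symm hlt
  rw [iSupIndep_iff_supIndep_of_injOn injOn]
  have main : ∀ (N : ℕ) (s : Finset ℕ), (∀ i ∈ s, i < N) → s.SupIndep f := by
    intro N
    induction N with
    | zero =>
      intro s hN
      have : s = ∅ := Finset.eq_empty_of_forall_notMem fun i hi =>
        Nat.not_lt_zero i (hN i hi)
      simp [this]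
    | succ N ih =>
      intro s hN
      by_cases hNs : N ∈ s
      · set t := s.erase N with ht
        have htlt : ∀ i ∈ t, i < N := by
          intro i hi
          have := Finset.ne_of_mem_erase hi
          have := hN i (Finset.mem_of_mem_erase hi)
          omega
        have hti : t.SupIndep f := ih t htlt
        rw [Finset.supIndep_iff_disjoint_erase]
        intro i hi
        by_cases hiN : i = N
        · subst hiN
          exact (h i).mono_right (hle i (s.erase i) htlt)
        · have hit : i ∈ t := Finset.mem_erase.mpr ⟨hiN, hi⟩
          have hilt : i < N := htlt i hit
          have hab : Disjoint (f i) ((t.erase i).sup f) :=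
            (Finset.supIndep_iff_disjoint_erase.mp hti) i hit
          have habc : Disjoint (f i ⊔ (t.erase i).sup f) (f N) := by
            refine Disjoint.symm ((h N).mono_right ?_)
            refine sup_le ?_ ?_
            · exact le_iSup₂ (f := fun j (_ : j < N) => f j) i hilt
            · exact hle N (t.erase i) fun j hj => htlt j (Finset.mem_of_mem_erase hj)
          have hres : Disjoint (f i) ((t.erase i).sup f ⊔ f N) :=
            hab.disjoint_sup_right_of_disjoint_sup_left habc
          have hseq : s.erase i = insert N (t.erase i) := by
            rw [ht, Finset.erase_right_comm]
            exact (Finset.insert_erase (Finset.mem_erase.mpr ⟨Ne.symm hiN, hNs⟩)).symm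
          rw [hseq, Finset.sup_insert, sup_comm]
          exact hres
      · exact ih s fun i hi => by
          have := hN i hi
          have : i ≠ N := fun h => hNs (h ▸ hi)
          omega

  intro s
  obtain ⟨N, hN⟩ : ∃ N, ∀ i ∈ s, i < N :=
    ⟨s.sup _root_.id + 1, fun i hi => Nat.lt_succ_of_le (Finset.le_sup (f := _root_.id) hi)⟩
  exact main N s hN

/-- Finite uniform dimension: every left ideal contains a finitely generated
essential submodule. -/
lemma exists_finset_essential (R : Type) [Ring R]
    (hdim : ¬ ∃ f : ℕ → Submodule R R, (∀ n, f n ≠ ⊥) ∧ iSupIndep f) (I : Ideal R) :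
    ∃ T : Finset R, ↑T ⊆ (I : Set R) ∧
      ∀ K : Ideal R, K ≤ I → K ⊓ Submodule.span R ↑T = ⊥ → K = ⊥ := by
  classical
  by_contra hcon
  push_neg at hcon
  have pick : ∀ T : Finset R, (↑T ⊆ (I : Set R)) →
      ∃ x, x ∈ I ∧ x ≠ 0 ∧ Submodule.span R {x} ⊓ Submodule.span R (↑T : Set R) = ⊥ := by
    intro T hT
    obtain ⟨K, hKI, hKint, hKne⟩ := hcon T hT
    obtain ⟨x, hxK, hx0⟩ := (Submodule.ne_bot_iff K).mp hKne
    refine ⟨x, hKI hxK, hx0, ?_⟩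
    refine le_bot_iff.mp ?_
    calc Submodule.span R {x} ⊓ Submodule.span R (↑T : Set R)
        ≤ K ⊓ Submodule.span R (↑T : Set R) := by
          exact inf_le_inf_right _ ((Submodule.span_singleton_le_iff_mem x K).mpr hxK)
      _ = ⊥ := hKint
  obtain ⟨c, hc⟩ : ∃ c : Finset R → R, ∀ T : Finset R, (↑T ⊆ (I : Set R)) →
      (c T ∈ I ∧ c T ≠ 0 ∧
        Submodule.span R {c T} ⊓ Submodule.span R (↑T : Set R) = ⊥) := by
    classical
    refine ⟨fun T => if h : (↑T ⊆ (I : Set R)) then (pick T h).choose else 0, fun T h => ?_⟩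
    simp only [dif_pos h]
    exact (pick T h).choose_spec
  obtain ⟨F, hF0, hFs⟩ : ∃ F : ℕ → Finset R, F 0 = ∅ ∧
      ∀ n, F (n + 1) = insert (c (F n)) (F n) := by
    classical
    exact ⟨fun n => Nat.rec ∅ (fun _ Fn => insert (c Fn) Fn) n, rfl, fun n => rfl⟩
  have hFI : ∀ n, (↑(F n) : Set R) ⊆ (I : Set R) := by
    intro n
    induction n with
    | zero => simp [hF0]
    | succ n ihn =>
      rw [hFs]
      intro y hy
      rcases Finset.mem_insert.mp hy with h | h
      · exact h ▸ (hc (F n) ihn).1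
      · exact ihn h
  have hx : ∀ n, c (F n) ∈ I ∧ c (F n) ≠ 0 ∧
      Submodule.span R {c (F n)} ⊓ Submodule.span R (↑(F n) : Set R) = ⊥ :=
    fun n => hc (F n) (hFI n)
  set x : ℕ → R := fun n => c (F n) with hxdef
  have hmono : ∀ n, F n ⊆ F (n + 1) := fun n => by
    rw [hFs]; exact Finset.subset_insert _ _
  have hmem : ∀ i n, i < n → x i ∈ F n := by
    intro i n hin
    induction n with
    | zero => omega
    | succ n ihn =>
      rcases Nat.lt_succ_iff_lt_or_eq.mp hin with h | h
      · exact hmono n (ihn h)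
      · subst h; rw [hFs]; exact Finset.mem_insert_self _ _
  refine hdim ⟨fun n => Submodule.span R {x n}, fun n => ?_, ?_⟩
  · simpa [Submodule.span_singleton_eq_bot] using (hx n).2.1
  · refine auxIndep _ (fun n => by simpa [Submodule.span_singleton_eq_bot] using (hx n).2.1) ?_
    intro n
    rw [disjoint_iff]
    refine le_bot_iff.mp ?_
    calc Submodule.span R {x n} ⊓ (⨆ i, ⨆ _ : i < n, Submodule.span R {x i})
        ≤ Submodule.span R {x n} ⊓ Submodule.span R (↑(F n) : Set R) := by
          refine inf_le_inf_left _ ?_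
          refine iSup₂_le fun i hi => ?_
          exact Submodule.span_le.mpr (by
            intro y hy
            rcases hy with rfl
            exact Submodule.subset_span (hmem i n hi))
      _ = ⊥ := (hx n).2.2

/-- Key lemma: a countably generated left ideal over a countably hereditary ring
containing an essential finitely generated submodule is finitely generated. -/
lemma fg_of_cg_essential (R : Type) [Ring R]
    (hR : ∀ I : Ideal R, CountablyGenerated R I → Module.Projective R ↥I)
    (Q : Ideal R) (hQcg : CountablyGenerated R Q)
    (T : Finset R) (hT : ↑T ⊆ (Q : Set R))
    (hess : ∀ K : Ideal R, K ≤ Q → K ⊓ Submodule.span R ↑T = ⊥ → K = ⊥) :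
    Q.FG := by
  classical
  obtain ⟨s, hs⟩ := (hR Q hQcg).out
  -- `s : ↥Q →ₗ[R] ↥Q →₀ R`, `hs : ∀ m, Finsupp.linearCombination R id (s m) = m`
  set S : Finset ↥Q := T.attach.biUnion (fun t => (s ⟨t.1, hT t.2⟩).support) with hS
  -- Step A: if z ∉ S then s w z = 0 for w with ↑w ∈ span T
  have stepA : ∀ z : ↥Q, z ∉ S → ∀ w : ↥Q, (w : R) ∈ Submodule.span R (↑T : Set R) →
      s w z = 0 := by
    intro z hz w hw
    set fz : ↥Q →ₗ[R] R := (Finsupp.lapply z) ∘ₗ s with hfz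
    have hker : Submodule.span R (↑T : Set R) ≤ Submodule.map Q.subtype (LinearMap.ker fz) := by
      rw [Submodule.span_le]
      intro t ht
      refine ⟨⟨t, hT ht⟩, ?_, rfl⟩
      have : z ∉ (s ⟨t, hT ht⟩).support := by
        intro hmem
        exact hz (Finset.mem_biUnion.mpr ⟨⟨t, ht⟩, Finset.mem_attach _ _, hmem⟩)
      simpa [hfz, Finsupp.lapply_apply] using Finsupp.notMem_support_iff.mp this
    obtain ⟨w', hw', hww⟩ := hker hw
    have : w' = w := Subtype.ext hww
    subst this
    simpa [hfz, Finsupp.lapply_apply] using hw'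
  -- Step B: if z ∉ S then s w z = 0 for all w
  have stepB : ∀ z : ↥Q, z ∉ S → ∀ w : ↥Q, s w z = 0 := by
    intro z hz
    set fz : ↥Q →ₗ[R] R := (Finsupp.lapply z) ∘ₗ s with hfz
    set J : Ideal R := LinearMap.range fz with hJ
    obtain ⟨S₀, hS₀c, hS₀⟩ := hQcg
    have hS₀Q : S₀ ⊆ (Q : Set R) := hS₀ ▸ Submodule.subset_span
    have hpre : Submodule.span R ((Q.subtype) ⁻¹' S₀) = (⊤ : Submodule R ↥Q) := by
      apply Submodule.map_injective_of_injective (Submodule.injective_subtype Q)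
      rw [Submodule.map_span, Submodule.map_top, Submodule.range_subtype]
      have : Q.subtype '' (Q.subtype ⁻¹' S₀) = S₀ := by
        rw [Set.image_preimage_eq_inter_range]
        simpa [Submodule.range_subtype] using Set.inter_eq_self_of_subset_left hS₀Q
      rw [this, hS₀]
    have hJcg : CountablyGenerated R J := by
      refine ⟨fz '' (Q.subtype ⁻¹' S₀), Set.Countable.image
        (hS₀c.preimage (Submodule.injective_subtype Q)) _, ?_⟩
      rw [← Submodule.map_span, hpre, Submodule.map_top]
    haveI := hR J hJcg
    obtain ⟨g, hg⟩ := Module.projective_lifting_property fz.rangeRestrict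
      (LinearMap.id : ↥J →ₗ[R] ↥J) fz.surjective_rangeRestrict
    have hgj : ∀ j : ↥J, fz.rangeRestrict (g j) = j := fun j => by
      exact LinearMap.congr_fun hg j
    set K : Ideal R := Submodule.map Q.subtype (LinearMap.range g) with hK
    have hKQ : K ≤ Q := Submodule.map_subtype_le _ _
    have hKdisj : K ⊓ Submodule.span R (↑T : Set R) = ⊥ := by
      refine le_bot_iff.mp ?_
      rintro y ⟨⟨w, ⟨j, rfl⟩, rfl⟩, hysp⟩
      have h0 : fz (g j) = 0 := by
        simpa [hfz, Finsupp.lapply_apply] using stepA z hz (g j) hysp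
      have : (j : R) = 0 := by
        have h1 := congrArg (Subtype.val) (hgj j)
        rw [show ((fz.rangeRestrict (g j) : R)) = fz (g j) from rfl, h0] at h1
        exact h1.symm
      have hj0 : j = 0 := Subtype.ext this
      simp [hj0]
    have hKbot : K = ⊥ := hess K hKQ hKdisj
    have hrgbot : LinearMap.range g = ⊥ := by
      apply Submodule.map_injective_of_injective (Submodule.injective_subtype Q)
      simpa [Submodule.map_bot] using hKbot
    have hJbot : ∀ j : ↥J, j = 0 := by
      intro j
      have hgj0 : g j = 0 := by
        have : g j ∈ LinearMap.range g := ⟨j, rfl⟩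
        rw [hrgbot] at this
        simpa using this
      have := hgj j
      rw [hgj0] at this
      simpa using this.symm
    intro w
    have : fz w ∈ J := ⟨w, rfl⟩
    have h0 : (⟨fz w, this⟩ : ↥J) = 0 := hJbot _
    have : fz w = 0 := congrArg Subtype.val h0
    simpa [hfz, Finsupp.lapply_apply] using this
  -- Step C: Q is generated by the finite set S
  refine Submodule.fg_def.mpr ⟨Q.subtype '' ↑S, (S.finite_toSet.image _), le_antisymm ?_ ?_⟩
  · rw [Submodule.span_le]
    rintro y ⟨z, _, rfl⟩
    exact z.2
  · intro y hy
    set m : ↥Q := ⟨y, hy⟩ with hm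
    have hmspan : m ∈ Submodule.span R (↑S : Set ↥Q) := by
      have hrepr : m = (s m).sum fun z r => r • z := by
        conv_lhs => rw [← hs m]
        rw [Finsupp.linearCombination_apply]
        rfl
      rw [hrepr]
      refine Submodule.sum_mem _ fun z hzsup => ?_
      have hzS : z ∈ S := by
        by_contra hzS
        exact (Finsupp.mem_support_iff.mp hzsup) (stepB z hzS m)
      exact Submodule.smul_mem _ _ (Submodule.subset_span hzS)
    have : (m : R) ∈ Submodule.map Q.subtype (Submodule.span R (↑S : Set ↥Q)) :=
      Submodule.mem_map_of_mem hmspan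
    rwa [Submodule.map_span] at this

/-- A left countably hereditary ring with finite left uniform (Goldie) dimension is left
noetherian. -/
theorem noetherian_of_countablyHereditary_of_finite_uniform_dimension (R : Type) [Ring R]
    (hR : ∀ I : Ideal R, CountablyGenerated R I → Module.Projective R ↥I)
    (hdim : ¬ ∃ f : ℕ → Submodule R R, (∀ n, f n ≠ ⊥) ∧ iSupIndep f) :
    IsNoetherianRing R := by
  classical
  rw [isNoetherianRing_iff_ideal_fg]
  intro I
  by_contra hI
  obtain ⟨T, hTI, hess⟩ := exists_finset_essential R hdim I
  have hex : ∀ T' : Finset R, ↑T' ⊆ (I : Set R) →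
      ∃ y, y ∈ I ∧ y ∉ Submodule.span R (↑T' : Set R) := by
    intro T' hT'
    by_contra hc
    push_neg at hc
    apply hI
    refine ⟨T', le_antisymm (Submodule.span_le.mpr hT') fun y hy => hc y hy⟩
  obtain ⟨d, hd⟩ : ∃ d : Finset R → R, ∀ T' : Finset R, (↑T' ⊆ (I : Set R)) →
      (d T' ∈ I ∧ d T' ∉ Submodule.span R (↑T' : Set R)) := by
    classical
    refine ⟨fun T' => if h : (↑T' ⊆ (I : Set R)) then (hex T' h).choose else 0, fun T' h => ?_⟩
    simp only [dif_pos h]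
    exact (hex T' h).choose_spec
  obtain ⟨G, hG0, hGs⟩ : ∃ G : ℕ → Finset R, G 0 = T ∧
      ∀ n, G (n + 1) = insert (d (G n)) (G n) := by
    classical
    exact ⟨fun n => Nat.rec T (fun _ Gn => insert (d Gn) Gn) n, rfl, fun n => rfl⟩
  have hGI : ∀ n, (↑(G n) : Set R) ⊆ (I : Set R) := by
    intro n
    induction n with
    | zero => rw [hG0]; exact hTI
    | succ n ihn =>
      rw [hGs]
      intro y hy
      rcases Finset.mem_insert.mp hy with h | h
      · exact h ▸ (hd (G n) ihn).1
      · exact ihn h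
  have hy : ∀ n, d (G n) ∈ I ∧ d (G n) ∉ Submodule.span R (↑(G n) : Set R) :=
    fun n => hd (G n) (hGI n)
  set Q : Ideal R := Submodule.span R (⋃ n, (↑(G n) : Set R)) with hQ
  have hQI : Q ≤ I := Submodule.span_le.mpr (Set.iUnion_subset fun n => hGI n)
  have hTQ : ↑T ⊆ (Q : Set R) := fun t ht =>
    Submodule.subset_span (Set.mem_iUnion.mpr ⟨0, by simpa [hG0] using ht⟩)
  have hQcg : CountablyGenerated R Q :=
    ⟨⋃ n, (↑(G n) : Set R), Set.countable_iUnion fun n => (G n).countable_toSet, rfl⟩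
  have hQfg : Q.FG := by
    refine fg_of_cg_essential R hR Q hQcg T hTQ ?_
    intro K hKQ hKd
    exact hess K (le_trans hKQ hQI) hKd
  -- But Q cannot be finitely generated
  have hQsup : Q = ⨆ n, Submodule.span R (↑(G n) : Set R) := by
    rw [hQ, Submodule.span_iUnion]
  have hmonoG : Monotone fun n => Submodule.span R (↑(G n) : Set R) := by
    apply monotone_nat_of_le_succ
    intro n
    refine Submodule.span_mono ?_
    rw [hGs]
    exact Finset.subset_insert _ _
  have hcomp := (Submodule.fg_iff_compact Q).mp hQfg
  rw [CompleteLattice.isCompactElement_iff_le_of_directed_sSup_le] at hcomp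
  obtain ⟨x, ⟨n, rfl⟩, hQle⟩ := hcomp (Set.range fun n => Submodule.span R (↑(G n) : Set R))
    (Set.range_nonempty _) (directedOn_range.mpr (hmonoG.directed_le))
    (by rw [sSup_range]; exact le_of_eq hQsup)
  have hdn : d (G n) ∈ Q := by
    refine Submodule.subset_span (Set.mem_iUnion.mpr ⟨n + 1, ?_⟩)
    rw [hGs]
    exact Finset.mem_insert_self _ _
  exact (hy n).2 (hQle hdn)
end

section
/- A left countably hereditary left Bézout domain is a left principal ideal domain. -/
private def Qprod {R : Type} [Ring R] (r : ℕ → R) (n : ℕ) : ℕ → R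
  | 0 => 1
  | (k+1) => Qprod r n k * r (n + k)

private lemma Qprod_spec {R : Type} [Ring R] (a r : ℕ → R)
    (ha : ∀ n, a n = r n * a (n+1)) (n : ℕ) : ∀ k, a n = Qprod r n k * a (n + k) := by
  intro k
  induction k with
  | zero => simp [Qprod]
  | succ k ih =>
      show a n = Qprod r n k * r (n + k) * a (n + k + 1)
      rw [mul_assoc, ← ha (n + k)]
      exact ih

private lemma core_s16 {R : Type} [Ring R] [IsDomain R] (J : Ideal R)
    (hproj : Module.Projective R J)
    (a r : ℕ → R) (ha : ∀ n, a n = r n * a (n+1)) (h0 : a 0 ≠ 0)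
    (hmem : ∀ n, a n ∈ J)
    (habs : ∀ x : J, ∃ n c, (x : R) = c * a n)
    (hr : ∀ n s, s * r n ≠ 1) : False := by
  obtain ⟨s, hs⟩ := hproj.out
  set A : ℕ → J := fun n => ⟨a n, hmem n⟩ with hA
  -- expansion of any x
  have key0 : ∀ x : J, (x : R) = ∑ j ∈ (s x).support, (s x) j * (j : R) := by
    intro x
    conv_lhs => rw [← hs x]
    rw [Finsupp.linearCombination_apply, Finsupp.sum]
    push_cast
    simp [smul_eq_mul]
  set F := (s (A 0)).support with hF
  choose ν c hνc using habs
  set N := F.sup ν with hN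
  have hjd : ∀ j ∈ F, ∃ d, (j : R) = d * a N := by
    intro j hj
    have hle : ν j ≤ N := Finset.le_sup hj
    have h2 := Qprod_spec a r ha (ν j) (N - ν j)
    rw [Nat.add_sub_cancel' hle] at h2
    exact ⟨c j * Qprod r (ν j) (N - ν j), by rw [mul_assoc, ← h2]; exact hνc j⟩
  choose d hd using hjd
  set Q0 := Qprod r 0 (N + 1) with hQ0def
  have eq2 : a 0 = Q0 * a (N + 1) := by
    have := Qprod_spec a r ha 0 (N + 1)
    rwa [Nat.zero_add] at this
  have hQ0 : Q0 ≠ 0 := by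
    intro h; apply h0; rw [eq2, h, zero_mul]
  have hAsmul : A 0 = Q0 • A (N + 1) := Subtype.ext (by simpa [hA] using eq2)
  have hsm : s (A 0) = Q0 • s (A (N + 1)) := by rw [hAsmul, map_smul]
  set g := s (A (N + 1)) with hg
  have eq1 : a 0 = Q0 * ∑ j ∈ F, g j * (j : R) := by
    have := key0 (A 0)
    rw [Finset.mul_sum]
    calc a 0 = ∑ j ∈ F, (s (A 0)) j * (j : R) := this
    _ = ∑ j ∈ F, Q0 * (g j * (j : R)) := by
          refine Finset.sum_congr rfl fun j hj => ?_
          rw [hsm, Finsupp.smul_apply, smul_eq_mul, mul_assoc]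
  have hN1 : a (N + 1) ≠ 0 := by
    intro h; apply h0; rw [eq2, h, mul_zero]
  have eq3 : a (N + 1) = ∑ j ∈ F, g j * (j : R) :=
    mul_left_cancel₀ hQ0 (by rw [← eq2, ← eq1])
  classical
  set d' : J → R := fun j => if h : j ∈ F then d j h else 0 with hd'
  have eq4 : a (N + 1) = (∑ j ∈ F, g j * d' j) * (r N * a (N + 1)) := by
    rw [← ha N, Finset.sum_mul, eq3]
    refine Finset.sum_congr rfl fun j hj => ?_
    rw [hd', mul_assoc]
    simp only [dif_pos hj]
    rw [← hd j hj]
  have eq5 : ((∑ j ∈ F, g j * d' j) * r N) * a (N + 1) = 1 * a (N + 1) := by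
    rw [one_mul, mul_assoc]; exact eq4.symm
  exact hr N _ (mul_right_cancel₀ hN1 eq5)

private lemma principal_of_cg {R : Type} [Ring R] [IsDomain R]
    (hch : ∀ I : Ideal R, CountablyGenerated R I → Module.Projective R ↥I)
    (hbez : ∀ I : Ideal R, I.FG → ∃ a : R, I = Submodule.span R {a})
    (J : Ideal R) (hcg : CountablyGenerated R J) :
    ∃ a : R, J = Submodule.span R {a} := by
  classical
  obtain ⟨S, hSc, hSspan⟩ := hcg
  rcases S.eq_empty_or_nonempty with hS | hS
  · refine ⟨0, ?_⟩
    rw [Submodule.span_zero_singleton, ← hSspan, hS, Submodule.span_empty]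
  obtain ⟨g, hg⟩ := hSc.exists_eq_range hS
  set Jn : ℕ → Ideal R := fun n => Submodule.span R (g '' Set.Iic n) with hJn
  have hfg : ∀ n, (Jn n).FG := fun n => Submodule.fg_span ((Set.finite_Iic n).image g)
  choose b hb using fun n => hbez (Jn n) (hfg n)
  have hmono : ∀ {m n : ℕ}, m ≤ n → Jn m ≤ Jn n := fun {m n} h =>
    Submodule.span_mono (Set.image_mono (Set.Iic_subset_Iic.mpr h))
  have hJn_le : ∀ n, Jn n ≤ J := by
    intro n
    rw [← hSspan, hg]
    exact Submodule.span_mono (Set.image_subset_range g _)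
  have hcover : ∀ x ∈ J, ∃ n, x ∈ Jn n := by
    intro x hx
    rw [← hSspan, hg] at hx
    obtain ⟨T, hT, hxT⟩ := Submodule.mem_span_finite_of_mem_span hx
    have hTi : ∀ t ∈ T, ∃ i, g i = t := fun t ht => hT ht
    choose i hi using hTi
    refine ⟨T.attach.sup (fun t => i t.1 t.2), ?_⟩
    have hTs : (T : Set R) ⊆ g '' Set.Iic (T.attach.sup fun t => i t.1 t.2) := by
      intro t ht
      have ht' : t ∈ T := Finset.mem_coe.mp ht
      exact ⟨i t ht', Set.mem_Iic.mpr (Finset.le_sup (f := fun t => i t.1 t.2)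
        (Finset.mem_attach T ⟨t, ht'⟩)), hi t ht'⟩
    exact Submodule.span_mono hTs hxT
  by_cases hstab : ∃ n, J ≤ Jn n
  · obtain ⟨n, hn⟩ := hstab
    exact ⟨b n, le_antisymm (hn.trans_eq (hb n)) ((hb n).symm.trans_le (hJn_le n))⟩
  push_neg at hstab
  -- build strictly increasing index sequence
  have hstep : ∀ p : ℕ, ∃ q, p ≤ q ∧ ¬ Jn q ≤ Jn p := by
    intro p
    obtain ⟨x, hxJ, hx⟩ := SetLike.not_le_iff_exists.mp (hstab p)
    obtain ⟨m, hm⟩ := hcover x hxJ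
    exact ⟨max p m, le_max_left _ _,
      fun hle => hx (hle (hmono (le_max_right p m) hm))⟩
  choose step hstep1 hstep2 using hstep
  set k : ℕ → ℕ := fun n => step^[n] 0 with hk
  have hksucc : ∀ n, k (n+1) = step (k n) := fun n => Function.iterate_succ_apply' step n 0
  have hklt : ∀ n, Jn (k n) < Jn (k (n+1)) := by
    intro n
    rw [hksucc n]
    exact lt_of_le_not_ge (hmono (hstep1 (k n))) (hstep2 (k n))
  have hkmono : StrictMono k := by
    apply strictMono_nat_of_lt_succ
    intro n
    rcases lt_or_ge (k n) (k (n+1)) with h | h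
    · exact h
    · exact absurd (hmono h) (not_le_of_gt (hklt n))
  set a : ℕ → R := fun n => b (k (n+1)) with ha'
  have haspan : ∀ n, Submodule.span R {a n} = Jn (k (n+1)) := fun n => (hb (k (n+1))).symm
  have hchain : ∀ n, ∃ c : R, c * a (n+1) = a n := by
    intro n
    have : a n ∈ Submodule.span R {a (n+1)} := by
      rw [haspan (n+1)]
      exact (hmono (hkmono.monotone (Nat.le_succ (n+1)))) (by
        rw [← haspan n]; exact Submodule.mem_span_singleton_self _)
    obtain ⟨c, hc⟩ := Submodule.mem_span_singleton.mp this
    exact ⟨c, hc⟩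
  choose r hr using hchain
  have ha : ∀ n, a n = r n * a (n+1) := fun n => (hr n).symm
  have h0 : a 0 ≠ 0 := by
    intro h
    have h1 := hklt 0
    rw [← haspan 0, h, Submodule.span_zero_singleton] at h1
    exact not_lt_bot h1
  have hmem : ∀ n, a n ∈ J := fun n =>
    hJn_le _ ((haspan n) ▸ Submodule.mem_span_singleton_self (a n))
  have habs : ∀ x : J, ∃ n c, (x : R) = c * a n := by
    rintro ⟨x, hx⟩
    obtain ⟨m, hm⟩ := hcover x hx
    have : x ∈ Submodule.span R {a m} := by
      rw [haspan m]
      exact hmono ((hkmono.le_apply).trans (hkmono.monotone (Nat.le_succ m))) hm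
    obtain ⟨cc, hcc⟩ := Submodule.mem_span_singleton.mp this
    exact ⟨m, cc, hcc.symm⟩
  have hrninv : ∀ n s, s * r n ≠ 1 := by
    intro n s hs1
    have h1 : a (n+1) = s * a n := by
      rw [ha n, ← mul_assoc, hs1, one_mul]
    have : Jn (k (n+2)) ≤ Jn (k (n+1)) := by
      rw [← haspan (n+1), Submodule.span_le, Set.singleton_subset_iff]
      rw [h1]
      exact Ideal.mul_mem_left _ s ((haspan n) ▸ Submodule.mem_span_singleton_self (a n))
    exact absurd this (not_le_of_gt (hklt (n+1)))
  exact absurd (core_s16 J (hch J ⟨S, hSc, hSspan⟩) a r ha h0 hmem habs hrninv) (fun h => h)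

/-- A left countably hereditary left Bézout domain is a left principal ideal domain. -/
theorem leftPID_of_countablyHereditary_bezout_domain (R : Type) [Ring R] [IsDomain R]
    (hch : ∀ I : Ideal R, CountablyGenerated R I → Module.Projective R ↥I)
    (hbez : ∀ I : Ideal R, I.FG → ∃ a : R, I = Submodule.span R {a}) :
    ∀ I : Ideal R, ∃ a : R, I = Submodule.span R {a} := by
  classical
  intro I
  by_cases hfg : I.FG
  · exact hbez I hfg
  exfalso
  -- build a strictly increasing chain of finite subsets of I
  have hpick : ∀ T : Finset R, (T : Set R) ⊆ (I : Set R) →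
      ∃ y, y ∈ I ∧ y ∉ Submodule.span R (T : Set R) := by
    intro T hT
    by_contra h
    push_neg at h
    apply hfg
    refine ⟨T, le_antisymm (Submodule.span_le.mpr hT) h⟩
  set pick : Finset R → R := fun T =>
    if h : ∃ y, y ∈ I ∧ y ∉ Submodule.span R (T : Set R) then h.choose else 0 with hpickdef
  set X : ℕ → Finset R := fun n => (fun T => insert (pick T) T)^[n] ∅ with hX
  have hXsucc : ∀ n, X (n+1) = insert (pick (X n)) (X n) := fun n =>
    Function.iterate_succ_apply' _ n ∅
  have hXsub : ∀ n, (X n : Set R) ⊆ (I : Set R) := by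
    intro n
    induction n with
    | zero => simp [hX]
    | succ n ih =>
        rw [hXsucc n]
        intro x hx
        rcases Finset.mem_insert.mp (Finset.mem_coe.mp hx) with h | h
        · have hh := hpick (X n) ih
          rw [h]
          show pick (X n) ∈ (I : Set R)
          simp only [hpickdef]
          rw [dif_pos hh]
          exact hh.choose_spec.1
        · exact ih h
  have hXspec : ∀ n, pick (X n) ∈ I ∧ pick (X n) ∉ Submodule.span R (X n : Set R) := by
    intro n
    have h := hpick (X n) (hXsub n)
    simp only [hpickdef]
    rw [dif_pos h]
    exact h.choose_spec
  have hXmono : ∀ {m n : ℕ}, m ≤ n → X m ⊆ X n := by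
    have hm : Monotone X := monotone_nat_of_le_succ (fun n => by
      rw [hXsucc n]; exact Finset.le_iff_subset.mpr (Finset.subset_insert _ _))
    intro m n h
    exact Finset.le_iff_subset.mp (hm h)
  set U : Set R := ⋃ n, (X n : Set R) with hU
  have hUc : U.Countable := Set.countable_iUnion (fun n => (X n).finite_toSet.countable)
  set J : Ideal R := Submodule.span R U with hJ
  obtain ⟨a, haJ⟩ := principal_of_cg hch hbez J ⟨U, hUc, rfl⟩
  have haJmem : a ∈ J := haJ ▸ Submodule.mem_span_singleton_self a
  obtain ⟨T, hTU, haT⟩ := Submodule.mem_span_finite_of_mem_span (hJ ▸ haJmem)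
  have hTn : ∀ t ∈ T, ∃ n, t ∈ X n := by
    intro t ht
    obtain ⟨s, ⟨n, rfl⟩, hts⟩ := hTU (Finset.mem_coe.mpr ht)
    exact ⟨n, Finset.mem_coe.mp hts⟩
  choose nn hnn using hTn
  set m := T.attach.sup (fun t => nn t.1 t.2) with hm
  have hTXm : (T : Set R) ⊆ (X m : Set R) := by
    intro t ht
    have ht' : t ∈ T := Finset.mem_coe.mp ht
    exact Finset.mem_coe.mpr (hXmono (Finset.le_sup (f := fun t => nn t.1 t.2)
      (Finset.mem_attach T ⟨t, ht'⟩)) (hnn t ht'))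
  have haXm : a ∈ Submodule.span R (X m : Set R) := Submodule.span_mono hTXm haT
  have hJle : J ≤ Submodule.span R (X m : Set R) := by
    rw [haJ, Submodule.span_le, Set.singleton_subset_iff]
    exact haXm
  have : pick (X m) ∈ Submodule.span R (X m : Set R) := by
    apply hJle
    apply Submodule.subset_span
    exact Set.mem_iUnion.mpr ⟨m + 1, by rw [hXsucc m]; exact Finset.mem_insert_self _ _⟩
  exact (hXspec m).2 this
end

section
/- A von Neumann regular ring is left countably hereditary: every countably generated left ideal is projective. -/
lemma vnr_step {R : Type} [Ring R] (hreg : ∀ a : R, ∃ x : R, a * x * a = a)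
    (I : Ideal R) (b e : R) (he : e * e = e) (heI : e ∈ I) (hb : b ∈ I) :
    ∃ e' : R, e' * e' = e' ∧ e' ∈ I ∧ e' * e = e ∧ e * e' = e ∧ b * e' = b ∧
      ∀ c : R, c * e = c → c * e' = c := by
  obtain ⟨c, hc⟩ : ∃ c : R, c = b - b * e := ⟨_, rfl⟩
  obtain ⟨x, hx⟩ := hreg c
  obtain ⟨f, hfdef⟩ : ∃ f : R, f = x * c := ⟨_, rfl⟩
  have hce : c * e = 0 := by
    rw [hc, sub_mul, mul_assoc, he, sub_self]
  have hfe : f * e = 0 := by rw [hfdef, mul_assoc, hce, mul_zero]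
  have hcf : c * f = c := by rw [hfdef, ← mul_assoc]; exact hx
  have hff : f * f = f := by rw [hfdef, mul_assoc x c (x * c), ← mul_assoc c x c, hx]
  have hfI : f ∈ I := by
    rw [hfdef, hc, mul_sub, ← mul_assoc]
    exact sub_mem (I.mul_mem_left x hb) (I.mul_mem_left (x * b) heI)
  refine ⟨e + f - e * f, ?_, ?_, ?_, ?_, ?_, ?_⟩
  · have h1 : ∀ y : R, e * (e * y) = e * y := fun y => by rw [← mul_assoc, he]
    have h2 : ∀ y : R, f * (e * y) = 0 := fun y => by rw [← mul_assoc, hfe, zero_mul]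
    have h3 : ∀ y : R, f * (f * y) = f * y := fun y => by rw [← mul_assoc, hff]
    simp only [mul_sub, sub_mul, mul_add, add_mul, mul_assoc, he, hff, hfe, h1, h2, h3,
      zero_mul, mul_zero]
    abel
  · exact sub_mem (add_mem heI hfI) (I.mul_mem_left e hfI)
  · rw [sub_mul, add_mul, he, mul_assoc, hfe, mul_zero, sub_zero, add_zero]
  · rw [mul_sub, mul_add, he, ← mul_assoc, he]; abel
  · have h4 : b * f - b * e * f = c * f := by rw [hc, sub_mul]
    rw [mul_sub, mul_add, ← mul_assoc, add_sub_assoc, h4, hcf, hc]; abel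
  · intro d hd
    rw [mul_sub, mul_add, ← mul_assoc, hd]; abel

/-- A von Neumann regular ring is left countably hereditary: every countably generated left
ideal is projective. -/
theorem countablyHereditary_of_vonNeumannRegular (R : Type) [Ring R]
    (hreg : ∀ a : R, ∃ x : R, a * x * a = a) :
    ∀ I : Ideal R, CountablyGenerated R I → Module.Projective R ↥I := by
  intro I hI
  obtain ⟨S, hSc, hSspan⟩ := hI
  obtain ⟨a, ha⟩ : ∃ a : ℕ → R, Submodule.span R (Set.range a) = I := by
    rcases S.eq_empty_or_nonempty with h | h
    · refine ⟨fun _ => (0 : R), ?_⟩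
      rw [Set.range_const, ← hSspan, h]
      simp
    · obtain ⟨g, hg⟩ := hSc.exists_eq_range h
      exact ⟨g, by rw [← hg, hSspan]⟩
  have main : ∀ p : ℕ × R, ∃ e' : R,
      (p.2 * p.2 = p.2 ∧ p.2 ∈ I ∧ ∀ k < p.1, a k * p.2 = a k) →
      (e' * e' = e' ∧ e' ∈ I ∧ e' * p.2 = p.2 ∧ p.2 * e' = p.2 ∧
        ∀ k < p.1 + 1, a k * e' = a k) := by
    intro p
    by_cases hp : p.2 * p.2 = p.2 ∧ p.2 ∈ I ∧ ∀ k < p.1, a k * p.2 = a k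
    · obtain ⟨h1, h2, h3⟩ := hp
      have haI : a p.1 ∈ I := by
        rw [← ha]; exact Submodule.subset_span ⟨p.1, rfl⟩
      obtain ⟨e', he1, he2, he3, he4, he5, he6⟩ := vnr_step hreg I (a p.1) p.2 h1 h2 haI
      refine ⟨e', fun _ => ⟨he1, he2, he3, he4, ?_⟩⟩
      intro k hk
      rcases Nat.lt_succ_iff_lt_or_eq.mp hk with hk | hk
      · exact he6 _ (h3 k hk)
      · rw [hk]; exact he5
    · exact ⟨0, fun h => absurd h hp⟩
  choose F hF using main
  let e : ℕ → R := fun n => Nat.rec (0 : R) (fun n en => F (n, en)) n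
  have e_zero : e 0 = 0 := rfl
  have inv : ∀ n, e n * e n = e n ∧ e n ∈ I ∧ ∀ k < n, a k * e n = a k := by
    intro n
    induction n with
    | zero => exact ⟨by simp [e_zero], by simp [e_zero], fun k hk => absurd hk (Nat.not_lt_zero k)⟩
    | succ n ih =>
      obtain ⟨h1, h2, _, _, h5⟩ := hF (n, e n) ih
      exact ⟨h1, h2, h5⟩
  have succ_rel : ∀ n, e (n + 1) * e n = e n ∧ e n * e (n + 1) = e n := by
    intro n
    obtain ⟨_, _, h3, h4, _⟩ := hF (n, e n) (inv n)
    exact ⟨h3, h4⟩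
  have chain : ∀ n m, m ≤ n → e m * e n = e m ∧ e n * e m = e m := by
    intro n
    induction n with
    | zero => intro m hm; obtain rfl := Nat.le_zero.mp hm; exact ⟨(inv 0).1, (inv 0).1⟩
    | succ n ih =>
      intro m hm
      rcases eq_or_lt_of_le hm with rfl | hlt
      · exact ⟨(inv (n + 1)).1, (inv (n + 1)).1⟩
      · have hmn : m ≤ n := Nat.lt_succ_iff.mp hlt
        constructor
        · rw [← (ih m hmn).1, mul_assoc, (succ_rel n).2, (ih m hmn).1]
        · rw [← (ih m hmn).2, ← mul_assoc, (succ_rel n).1]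
  have habs : ∀ x ∈ I, ∃ n, x * e n = x := by
    intro x hx
    rw [← ha] at hx
    induction hx using Submodule.span_induction with
    | mem y hy =>
      obtain ⟨k, rfl⟩ := hy
      exact ⟨k + 1, (inv (k + 1)).2.2 k (Nat.lt_succ_self k)⟩
    | zero => exact ⟨0, zero_mul _⟩
    | add y z _ _ hy hz =>
      obtain ⟨m, hm⟩ := hy
      obtain ⟨n, hn⟩ := hz
      refine ⟨max m n, ?_⟩
      have h1 : y * e (max m n) = y := by
        rw [← hm, mul_assoc, (chain (max m n) m (le_max_left m n)).1]
      have h2 : z * e (max m n) = z := by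
        rw [← hn, mul_assoc, (chain (max m n) n (le_max_right m n)).1]
      rw [add_mul, h1, h2]
    | smul r y _ hy =>
      obtain ⟨n, hn⟩ := hy
      exact ⟨n, by rw [smul_eq_mul, mul_assoc, hn]⟩
  let f : ℕ → R := fun k => e (k + 1) - e k
  have hfI : ∀ k, f k ∈ I := fun k => sub_mem (inv (k + 1)).2.1 (inv k).2.1
  have hfidem : ∀ k, f k * f k = f k := by
    intro k
    show (e (k + 1) - e k) * (e (k + 1) - e k) = e (k + 1) - e k
    rw [sub_mul, mul_sub, mul_sub, (inv (k + 1)).1, (inv k).1, (succ_rel k).1, (succ_rel k).2]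
    abel
  have hsum : ∀ n, ∑ k ∈ Finset.range n, f k = e n := by
    intro n
    calc ∑ k ∈ Finset.range n, f k = ∑ k ∈ Finset.range n, (e (k + 1) - e k) := rfl
      _ = e n - e 0 := Finset.sum_range_sub e n
      _ = e n := by rw [e_zero, sub_zero]
  have hzero : ∀ (x : R) (n k : ℕ), x * e n = x → n ≤ k → x * f k = 0 := by
    intro x n k hx hnk
    have h1 : x * e (k + 1) = x := by
      rw [← hx, mul_assoc, (chain (k + 1) n (Nat.le_succ_of_le hnk)).1]
    have h2 : x * e k = x := by
      rw [← hx, mul_assoc, (chain k n hnk).1]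
    show x * (e (k + 1) - e k) = 0
    rw [mul_sub, h1, h2, sub_self]
  have hNex : ∀ x : ↥I, ∃ n, (x : R) * e n = (x : R) := fun x => habs x x.2
  choose N hN using hNex
  let σfun : ↥I → (ℕ →₀ R) := fun x =>
    ∑ k ∈ Finset.range (N x), Finsupp.single k ((x : R) * f k)
  have hcoeff : ∀ (x : ↥I) (k : ℕ), σfun x k = (x : R) * f k := by
    intro x k
    show (∑ j ∈ Finset.range (N x), Finsupp.single j ((x : R) * f j)) k = (x : R) * f k
    rw [Finset.sum_apply']
    simp only [Finsupp.single_apply]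
    rw [Finset.sum_ite_eq' (Finset.range (N x)) k]
    split_ifs with h
    · rfl
    · exact (hzero x (N x) k (hN x) (not_lt.mp (fun hc => h (Finset.mem_range.mpr hc)))).symm
  let σ : ↥I →ₗ[R] (ℕ →₀ R) :=
    { toFun := σfun
      map_add' := by
        intro x y
        ext k
        simp [hcoeff, add_mul]
      map_smul' := by
        intro r x
        ext k
        simp [hcoeff, mul_assoc] }
  let π : (ℕ →₀ R) →ₗ[R] ↥I := Finsupp.linearCombination R (fun k => (⟨f k, hfI k⟩ : ↥I))
  refine Module.Projective.of_split σ π ?_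
  ext x
  have hπ : π (σfun x) = ∑ k ∈ Finset.range (N x), ((x : R) * f k) • (⟨f k, hfI k⟩ : ↥I) := by
    rw [map_sum]
    exact Finset.sum_congr rfl fun k _ => Finsupp.linearCombination_single ..
  show ((π (σfun x) : ↥I) : R) = ((x : ↥I) : R)
  rw [hπ]
  push_cast
  simp only [smul_eq_mul]
  have h1 : ∀ k ∈ Finset.range (N x), (x : R) * f k * f k = (x : R) * f k :=
    fun k _ => by rw [mul_assoc, hfidem k]
  rw [Finset.sum_congr rfl h1, ← Finset.mul_sum, hsum, hN x]
end

section
/- An abelian group is torsion-free and Mittag-Leffler if and only if it is ℵ₁-free (every countably generated subgroup is free). -/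
open scoped TensorProduct

/-- The canonical map `(∏ i, Nᵢ) ⊗_ℤ M → ∏ i, (Nᵢ ⊗_ℤ M)`. -/
noncomputable def zCanonical {ι : Type} (N : ι → Type) [∀ i, AddCommGroup (N i)]
    (M : Type) [AddCommGroup M] :
    ((∀ i, N i) ⊗[ℤ] M) →ₗ[ℤ] ∀ i, (N i ⊗[ℤ] M) :=
  TensorProduct.lift
    (LinearMap.mk₂ ℤ (fun n m i => n i ⊗ₜ[ℤ] m)
      (fun n n' m => by funext i; simp [TensorProduct.add_tmul])
      (fun c n m => by funext i; simp [TensorProduct.smul_tmul'])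
      (fun n m m' => by funext i; simp [TensorProduct.tmul_add])
      (fun c n m => by funext i; simp [TensorProduct.tmul_smul]))

/-- The old Mathlib definition (removed since): a monoid is torsion-free if every
non-identity element has infinite order. -/
def AddMonoid.IsTorsionFree (G : Type*) [AddMonoid G] : Prop :=
  ∀ g : G, g ≠ 0 → ¬IsOfFinAddOrder g

theorem AddMonoid.isTorsionFree_iff_noZeroSMulDivisors_int {G : Type*} [AddCommGroup G] :
    AddMonoid.IsTorsionFree G ↔ NoZeroSMulDivisors ℤ G := by
  constructor
  · intro h
    refine ⟨fun {k x} hkx => ?_⟩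
    by_contra hc
    push_neg at hc
    exact h x hc.2 (isOfFinAddOrder_iff_zsmul_eq_zero.mpr ⟨k, hc.1, hkx⟩)
  · intro h g hg hfin
    obtain ⟨k, hk, hkg⟩ := isOfFinAddOrder_iff_zsmul_eq_zero.mp hfin
    rcases smul_eq_zero.mp hkg with h1 | h1
    · exact hk h1
    · exact hg h1

section Canon

variable {ι : Type} (N : ι → Type) [∀ i, AddCommGroup (N i)]

/-- general canonical map for any ℤ-module -/
noncomputable def canon (X : Type) [AddCommGroup X] [Module ℤ X] :
    ((∀ i, N i) ⊗[ℤ] X) →ₗ[ℤ] ∀ i, (N i ⊗[ℤ] X) :=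
  TensorProduct.lift
    (LinearMap.mk₂ ℤ (fun n m i => n i ⊗ₜ[ℤ] m)
      (fun n n' m => by funext i; simp [TensorProduct.add_tmul])
      (fun c n m => by funext i; simp [TensorProduct.smul_tmul'])
      (fun n m m' => by funext i; simp [TensorProduct.tmul_add])
      (fun c n m => by
        funext i
        exact LinearMap.map_smul (TensorProduct.mk ℤ (N i) X (n i)) c m))

@[simp] lemma canon_tmul (X : Type) [AddCommGroup X] [Module ℤ X] (p : ∀ i, N i) (x : X) (i : ι) :
    canon N X (p ⊗ₜ[ℤ] x) i = p i ⊗ₜ[ℤ] x := rfl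

lemma canon_natural {X Y : Type} [AddCommGroup X] [Module ℤ X] [AddCommGroup Y] [Module ℤ Y]
    (f : X →ₗ[ℤ] Y) (z : ((∀ i, N i) ⊗[ℤ] X)) (i : ι) :
    canon N Y (LinearMap.lTensor _ f z) i = LinearMap.lTensor (N i) f (canon N X z i) := by
  induction z using TensorProduct.induction_on with
  | zero => simp
  | tmul p x => simp
  | add a b ha hb => simp [map_add, ha, hb]

end Canon

section Vanish

variable {M P : Type} [AddCommGroup M] [AddCommGroup P]

/-- If an element of `P ⊗ F` vanishes in `P ⊗ M`, it vanishes in `P ⊗ G` for some f.g.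
`G` with `F ≤ G`. -/
theorem exists_fg_vanish (F : Submodule ℤ M) (hF : F.FG) (x : P ⊗[ℤ] ↥F)
    (hx : LinearMap.lTensor P F.subtype x = 0) :
    ∃ (G : Submodule ℤ M) (h : F ≤ G), G.FG ∧
      LinearMap.lTensor P (Submodule.inclusion h) x = 0 := by
  classical
  let κ := {G : Submodule ℤ M // F ≤ G ∧ G.FG}
  let Gs : κ → Type := fun G => ↥(G.1)
  let fs : ∀ i j : κ, i ≤ j → Gs i →ₗ[ℤ] Gs j := fun i j h => Submodule.inclusion h
  haveI : Nonempty κ := ⟨⟨F, le_refl F, hF⟩⟩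
  haveI : IsDirected κ (· ≤ ·) := ⟨fun i j => ⟨⟨i.1 ⊔ j.1, le_trans i.2.1 le_sup_left,
    Submodule.FG.sup i.2.2 j.2.2⟩, Subtype.coe_le_coe.mp le_sup_left,
    Subtype.coe_le_coe.mp le_sup_right⟩⟩
  haveI hds : DirectedSystem Gs (fun i j h => fs i j h) := by
    constructor
    · intro i x; rfl
    · intro k j i hij hjk x; rfl
  -- the equivalence between the direct limit and M
  let L : Module.DirectLimit Gs fs →ₗ[ℤ] M :=
    Module.DirectLimit.lift ℤ κ Gs fs (fun i => (i.1).subtype) (fun i j hij x => rfl)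
  have hLof : ∀ (i : κ) (y : Gs i), L (Module.DirectLimit.of ℤ κ Gs fs i y) = (y : M) := by
    intro i y
    simp only [L]
    exact Module.DirectLimit.lift_of (R := ℤ) (ι := κ) (G := Gs) (f := fs) _ _ y
  have hLker : ∀ z, L z = 0 → z = 0 := by
    intro z hz
    obtain ⟨i, y, rfl⟩ := Module.DirectLimit.exists_of z
    rw [hLof] at hz
    have : y = 0 := Subtype.ext hz
    rw [this, map_zero]
  have hLinj : Function.Injective L := by
    intro a b hab
    rw [← sub_eq_zero]
    exact hLker _ (by rw [map_sub, hab, sub_self])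
  have hLsurj : Function.Surjective L := by
    intro m
    refine ⟨Module.DirectLimit.of ℤ κ Gs fs
      ⟨F ⊔ Submodule.span ℤ {m}, le_sup_left, Submodule.FG.sup hF (Submodule.fg_span_singleton m)⟩
      ⟨m, Submodule.mem_sup_right (Submodule.mem_span_singleton_self m)⟩, ?_⟩
    rw [hLof]
  let e : Module.DirectLimit Gs fs ≃ₗ[ℤ] M := LinearEquiv.ofBijective L ⟨hLinj, hLsurj⟩
  -- transfer to tensor products
  letI : ∀ i, Module ℤ (P ⊗[ℤ] Gs i) := fun i => TensorProduct.instModule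
  haveI : DirectedSystem (fun i => P ⊗[ℤ] Gs i)
      (fun i j h => LinearMap.lTensor P (fs i j h)) := by
    constructor
    · intro i x
      have h1 : fs i i (le_refl i) = LinearMap.id := by ext v; rfl
      rw [h1, LinearMap.lTensor_id]; rfl
    · intro k j i hij hjk x
      have h1 : (fs j k hjk).comp (fs i j hij) = fs i k (le_trans hij hjk) := by ext v; rfl
      rw [← h1, LinearMap.lTensor_comp]; rfl
  let Ψ : Module.DirectLimit (fun i => P ⊗[ℤ] Gs i) (fun i j h => LinearMap.lTensor P (fs i j h))
      →ₗ[ℤ] P ⊗[ℤ] M :=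
    ((TensorProduct.congr (LinearEquiv.refl ℤ P) e).toLinearMap).comp
      (TensorProduct.directLimitRight fs P).symm.toLinearMap
  have hΨinj : Function.Injective Ψ :=
    ((TensorProduct.congr (LinearEquiv.refl ℤ P) e).injective).comp
      (TensorProduct.directLimitRight fs P).symm.injective
  set i₀ : κ := ⟨F, le_refl F, hF⟩ with hi₀
  have hΨof : ∀ y : P ⊗[ℤ] ↥F,
      Ψ (Module.DirectLimit.of ℤ κ (fun i => P ⊗[ℤ] Gs i)
        (fun i j h => LinearMap.lTensor P (fs i j h)) i₀ y) = LinearMap.lTensor P F.subtype y := by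
    intro y
    induction y using TensorProduct.induction_on with
    | zero => simp
    | tmul p g =>
      show (TensorProduct.congr (LinearEquiv.refl ℤ P) e) ((TensorProduct.directLimitRight fs P).symm _) = _
      rw [TensorProduct.directLimitRight_symm_of_tmul]
      erw [TensorProduct.congr_tmul]
      rw [LinearEquiv.refl_apply, LinearMap.lTensor_tmul]
      congr 1
      exact hLof i₀ g
    | add a b ha hb => rw [map_add, map_add, ha, hb, map_add]
  have h0 : Module.DirectLimit.of ℤ κ (fun i => P ⊗[ℤ] Gs i)
      (fun i j h => LinearMap.lTensor P (fs i j h)) i₀ x = 0 := by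
    apply hΨinj
    rw [hΨof, hx, map_zero]
  obtain ⟨j, hij, hj⟩ := Module.DirectLimit.of.zero_exact h0
  exact ⟨j.1, le_trans (le_refl F) hij, j.2.2, hj⟩

end Vanish

section Retract

variable {M : Type} [AddCommGroup M]

theorem fg_of_le_fg {H G : Submodule ℤ M} (h : H ≤ G) (hG : G.FG) : H.FG := by
  haveI : Module.Finite ℤ ↥G := Module.Finite.iff_fg.mpr hG
  haveI : IsNoetherian ℤ ↥G := inferInstance
  have h1 : (H.comap G.subtype).FG := IsNoetherian.noetherian _
  have h2 : (H.comap G.subtype).map G.subtype = H := by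
    rw [Submodule.map_comap_subtype, inf_eq_right.mpr h]
  rw [← h2]
  exact h1.map _

theorem exists_retraction [NoZeroSMulDivisors ℤ M] {G Y : Submodule ℤ M}
    (hGY : G ≤ Y) (hY : Y.FG)
    (hpure : ∀ (k : ℤ) (x : M), k ≠ 0 → x ∈ Y → k • x ∈ G → x ∈ G) :
    ∃ r : ↥Y →ₗ[ℤ] ↥G, ∀ g : ↥G, r (Submodule.inclusion hGY g) = g := by
  classical
  set G' : Submodule ℤ ↥Y := G.comap Y.subtype with hG'
  haveI : Module.Finite ℤ ↥Y := Module.Finite.iff_fg.mpr hY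
  haveI : Module.Finite ℤ (↥Y ⧸ G') := Module.Finite.of_surjective G'.mkQ (Submodule.mkQ_surjective _)
  haveI : NoZeroSMulDivisors ℤ (↥Y ⧸ G') := by
    refine ⟨fun {k q} hkq => ?_⟩
    by_cases hk : k = 0
    · exact Or.inl hk
    · refine Or.inr ?_
      obtain ⟨y, rfl⟩ := Submodule.mkQ_surjective G' q
      rw [← map_smul, Submodule.mkQ_apply, Submodule.Quotient.mk_eq_zero] at hkq
      rw [Submodule.mkQ_apply, Submodule.Quotient.mk_eq_zero]
      have : (k • y : ↥Y) = ⟨k • (y : M), Y.smul_mem k y.2⟩ := rfl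
      have hmem : k • (y : M) ∈ G := by
        simpa [hG', Submodule.mem_comap, this] using hkq
      exact Submodule.mem_comap.mpr (hpure k y hk y.2 hmem)
  haveI : Module.Free ℤ (↥Y ⧸ G') := Module.free_of_finite_type_torsion_free'
  obtain ⟨σ, hσ⟩ := Module.projective_lifting_property G'.mkQ LinearMap.id
    (Submodule.mkQ_surjective _)
  set π : ↥Y →ₗ[ℤ] ↥Y := LinearMap.id - σ ∘ₗ G'.mkQ with hπ
  have hmem : ∀ y : ↥Y, (π y : M) ∈ G := by
    intro y
    have : G'.mkQ (π y) = 0 := by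
      simp only [hπ, LinearMap.sub_apply, LinearMap.id_apply, LinearMap.coe_comp,
        Function.comp_apply, map_sub]
      have := LinearMap.congr_fun hσ (G'.mkQ y)
      simp only [LinearMap.coe_comp, Function.comp_apply, LinearMap.id_apply] at this
      rw [this, sub_self]
    rw [Submodule.mkQ_apply, Submodule.Quotient.mk_eq_zero] at this
    exact this
  refine ⟨LinearMap.codRestrict G (Y.subtype ∘ₗ π) hmem, fun g => ?_⟩
  apply Subtype.ext
  have h0 : G'.mkQ (Submodule.inclusion hGY g) = 0 := by
    rw [Submodule.mkQ_apply, Submodule.Quotient.mk_eq_zero]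
    exact Submodule.mem_comap.mpr g.2
  simp only [LinearMap.codRestrict_apply, LinearMap.coe_comp, Function.comp_apply,
    Submodule.coe_subtype, hπ, LinearMap.sub_apply, LinearMap.id_apply, h0, map_zero, sub_zero]
  rfl

/-- tensoring with a pure f.g. submodule is injective -/
theorem lTensor_injective_of_pure [NoZeroSMulDivisors ℤ M] {G : Submodule ℤ M} (hG : G.FG)
    (hpure : ∀ (k : ℤ) (x : M), k ≠ 0 → k • x ∈ G → x ∈ G)
    (P : Type) [AddCommGroup P] : Function.Injective (LinearMap.lTensor P G.subtype) := by
  have hker : ∀ z : P ⊗[ℤ] ↥G, LinearMap.lTensor P G.subtype z = 0 → z = 0 := by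
    intro z hz
    obtain ⟨Y, hGY, hYfg, hY0⟩ := exists_fg_vanish G hG z hz
    obtain ⟨r, hr⟩ := exists_retraction hGY hYfg (fun k x hk hxY hkx => hpure k x hk hkx)
    have hcomp : r ∘ₗ Submodule.inclusion hGY = LinearMap.id := by
      ext v; exact congrArg Subtype.val (hr v)
    calc z = LinearMap.lTensor P (r ∘ₗ Submodule.inclusion hGY) z := by
            rw [hcomp, LinearMap.lTensor_id]; rfl
    _ = LinearMap.lTensor P r (LinearMap.lTensor P (Submodule.inclusion hGY) z) := by
            rw [LinearMap.lTensor_comp]; rfl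
    _ = 0 := by rw [hY0, map_zero]
  intro a b hab
  rw [← sub_eq_zero]
  exact hker _ (by rw [map_sub, hab, sub_self])

end Retract

section CoordTensor

variable {R : Type} [CommRing R]

/-- coordinate projection of a tensor with a free module -/
noncomputable def coordTensor (X : Type) [AddCommMonoid X] [Module R X]
    {W : Type} [AddCommMonoid W] [Module R W] {J : Type} (b : Module.Basis J R W) (j : J) :
    X ⊗[R] W →ₗ[R] X :=
  TensorProduct.lift
    (LinearMap.mk₂ R (fun (x : X) (w : W) => b.repr w j • x)
      (fun x x' w => smul_add _ _ _)
      (fun c x w => smul_comm _ _ _)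
      (fun x w w' => by rw [map_add, Finsupp.add_apply, add_smul])
      (fun c x w => by rw [map_smul, Finsupp.smul_apply, smul_eq_mul, mul_smul]))

@[simp] lemma coordTensor_tmul (X : Type) [AddCommMonoid X] [Module R X]
    {W : Type} [AddCommMonoid W] [Module R W] {J : Type} (b : Module.Basis J R W) (j : J)
    (x : X) (w : W) : coordTensor X b j (x ⊗ₜ[R] w) = b.repr w j • x := rfl

end CoordTensor

section CanonInj

variable {ι : Type} (N : ι → Type) [∀ i, AddCommGroup (N i)]

theorem canon_injective_of_free {W : Type} [AddCommGroup W] [Module ℤ W]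
    {J : Type} [Fintype J] (b : Module.Basis J ℤ W) :
    Function.Injective (canon N W) := by
  classical
  have hrec : ∀ z : ((∀ i, N i) ⊗[ℤ] W), z = ∑ j, (coordTensor _ b j z) ⊗ₜ[ℤ] b j := by
    intro z
    induction z using TensorProduct.induction_on with
    | zero => simp
    | tmul p w =>
      simp only [coordTensor_tmul]
      rw [Finset.sum_congr rfl (fun j _ => ((TensorProduct.smul_tmul' (b.repr w j) p (b j)).symm.trans
        (LinearMap.map_smul (TensorProduct.mk ℤ _ W p) (b.repr w j) (b j)).symm).trans
        (TensorProduct.mk_apply p _)),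
        ← TensorProduct.tmul_sum, b.sum_repr]
    | add a b ha hb =>
      simp only [map_add]
      conv_lhs => rw [ha, hb]
      rw [← Finset.sum_add_distrib]
      exact Finset.sum_congr rfl fun j _ => (TensorProduct.add_tmul _ _ _).symm
  have hcomp : ∀ (z : ((∀ i, N i) ⊗[ℤ] W)) (j : J) (i : ι),
      coordTensor (N i) b j (canon N W z i) = (coordTensor _ b j z) i := by
    intro z j i
    induction z using TensorProduct.induction_on with
    | zero => simp
    | tmul p w => simp
    | add a b ha hb => simp only [map_add, Pi.add_apply, ha, hb]
  have hker : ∀ z : ((∀ i, N i) ⊗[ℤ] W), canon N W z = 0 → z = 0 := by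
    intro z hz
    rw [hrec z]
    have : ∀ j, coordTensor _ b j z = 0 := by
      intro j
      funext i
      rw [← hcomp z j i, congrFun hz i]
      simp
    simp [this]
  intro a b hab
  rw [← sub_eq_zero]
  exact hker _ (by rw [map_sub, hab, sub_self])

end CanonInj

section ZQuot

variable {M : Type} [AddCommGroup M]

theorem one_tmul_smul_eq_zero (k : ℤ) (m : M) :
    ((QuotientAddGroup.mk 1 : ℤ ⧸ AddSubgroup.zmultiples k)) ⊗ₜ[ℤ] (k • m) = 0 := by
  rw [TensorProduct.tmul_smul, TensorProduct.smul_tmul']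
  have h1 : (k • (QuotientAddGroup.mk 1 : ℤ ⧸ AddSubgroup.zmultiples k)) =
      QuotientAddGroup.mk (k • (1 : ℤ)) := by
    rw [← QuotientAddGroup.mk'_apply, ← map_zsmul (QuotientAddGroup.mk' (AddSubgroup.zmultiples k))
      k (1 : ℤ), QuotientAddGroup.mk'_apply]
  rw [h1]
  have h2 : (QuotientAddGroup.mk (k • (1 : ℤ)) : ℤ ⧸ AddSubgroup.zmultiples k) = 0 := by
    rw [QuotientAddGroup.eq_zero_iff]
    simpa using AddSubgroup.mem_zmultiples k
  rw [h2, TensorProduct.zero_tmul]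

theorem exists_of_one_tmul_eq_zero {G : Submodule ℤ M} (k : ℤ) (g : ↥G)
    (h : ((QuotientAddGroup.mk 1 : ℤ ⧸ AddSubgroup.zmultiples k)) ⊗ₜ[ℤ] g = 0) :
    ∃ g' ∈ G, k • g' = (g : M) := by
  classical
  set S : Submodule ℤ ↥G := LinearMap.range (LinearMap.lsmul ℤ ↥G k) with hS
  set A := ↥G ⧸ S.toAddSubgroup with hA
  set f0 : ℤ →+ (↥G →+ A) :=
    { toFun := fun c => (QuotientAddGroup.mk' S.toAddSubgroup).comp
        ((LinearMap.lsmul ℤ ↥G c).toAddMonoidHom)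
      map_zero' := by
        ext g'
        simp
      map_add' := by
        intro c c'
        ext g'
        simp [add_smul] } with hf0
  have hvanish : ∀ c ∈ AddSubgroup.zmultiples k, f0 c = 0 := by
    intro c hc
    obtain ⟨n, rfl⟩ := AddSubgroup.mem_zmultiples_iff.mp hc
    ext g'
    simp only [hf0, AddMonoidHom.coe_mk, ZeroHom.coe_mk, AddMonoidHom.coe_comp,
      Function.comp_apply, LinearMap.toAddMonoidHom_coe, LinearMap.lsmul_apply,
      AddMonoidHom.zero_apply]
    rw [QuotientAddGroup.mk'_apply, QuotientAddGroup.eq_zero_iff]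
    refine Submodule.mem_toAddSubgroup _ |>.mpr ?_
    have : (n • k) • g' = n • (k • g' : ↥G) := by
      rw [smul_assoc]
    rw [this]
    exact Submodule.smul_mem _ _ ⟨g', rfl⟩
  set fbar : (ℤ ⧸ AddSubgroup.zmultiples k) →+ (↥G →+ A) :=
    QuotientAddGroup.lift _ f0 hvanish with hfbar
  have hcompat : ∀ (r : ℤ) (x : ℤ ⧸ AddSubgroup.zmultiples k) (g' : ↥G),
      fbar (r • x) g' = fbar x (r • g') := by
    intro r x g'
    induction x using QuotientAddGroup.induction_on with
    | H c =>
      have h1 : r • (QuotientAddGroup.mk c : ℤ ⧸ AddSubgroup.zmultiples k) =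
          QuotientAddGroup.mk (r • c) := (map_zsmul (QuotientAddGroup.mk' _) r c).symm
      rw [h1]
      simp only [hfbar, QuotientAddGroup.lift_mk, hf0, AddMonoidHom.coe_mk, ZeroHom.coe_mk,
        AddMonoidHom.coe_comp, Function.comp_apply, LinearMap.toAddMonoidHom_coe,
        LinearMap.lsmul_apply]
      congr 1
      rw [smul_eq_mul, mul_comm r c, mul_smul]
  set χ := TensorProduct.liftAddHom fbar hcompat with hχ
  have hval : χ (((QuotientAddGroup.mk 1 : ℤ ⧸ AddSubgroup.zmultiples k)) ⊗ₜ[ℤ] g) =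
      QuotientAddGroup.mk' S.toAddSubgroup g := by
    rw [hχ, TensorProduct.liftAddHom_tmul]
    simp [hfbar, hf0]
  rw [h, map_zero] at hval
  have hmem : g ∈ S := by
    have := hval.symm
    rw [QuotientAddGroup.mk'_apply, QuotientAddGroup.eq_zero_iff] at this
    exact Submodule.mem_toAddSubgroup _ |>.mp this
  obtain ⟨g', hg'⟩ := hmem
  refine ⟨(g' : M), g'.2, ?_⟩
  have : (k • g' : ↥G) = g := by simpa using hg'
  calc k • (g' : M) = ((k • g' : ↥G) : M) := by rw [Submodule.coe_smul]
  _ = (g : M) := by rw [this]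

end ZQuot

section Pclos

variable {M : Type} [AddCommGroup M]

/-- pure closure of a submodule -/
def pclos (F : Submodule ℤ M) : Submodule ℤ M where
  carrier := {x | ∃ k : ℤ, k ≠ 0 ∧ k • x ∈ F}
  add_mem' := by
    rintro x y ⟨k, hk, hkx⟩ ⟨l, hl, hly⟩
    refine ⟨k * l, mul_ne_zero hk hl, ?_⟩
    have : (k * l) • (x + y) = l • (k • x) + k • (l • y) := by
      rw [smul_add, smul_smul, smul_smul, mul_comm l k]
    rw [this]
    exact Submodule.add_mem _ (Submodule.smul_mem _ _ hkx) (Submodule.smul_mem _ _ hly)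
  zero_mem' := ⟨1, one_ne_zero, by simp⟩
  smul_mem' := by
    rintro c x ⟨k, hk, hkx⟩
    refine ⟨k, hk, ?_⟩
    have : k • (c • x) = c • (k • x) := smul_comm k c x
    rw [this]
    exact Submodule.smul_mem _ _ hkx

theorem le_pclos (F : Submodule ℤ M) : F ≤ pclos F := fun x hx => ⟨1, one_ne_zero, by simpa⟩

theorem pclos_mono {F G : Submodule ℤ M} (h : F ≤ G) : pclos F ≤ pclos G := by
  rintro x ⟨k, hk, hkx⟩; exact ⟨k, hk, h hkx⟩

theorem pclos_pure (F : Submodule ℤ M) (k : ℤ) (x : M) (hk : k ≠ 0) (hx : k • x ∈ pclos F) :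
    x ∈ pclos F := by
  obtain ⟨l, hl, hlx⟩ := hx
  refine ⟨l * k, mul_ne_zero hl hk, ?_⟩
  rw [mul_smul]
  exact hlx

theorem pclos_mem_iff (F : Submodule ℤ M) (x : M) :
    x ∈ pclos F ↔ ∃ k : ℤ, k ≠ 0 ∧ k • x ∈ F := Iff.rfl

end Pclos

lemma zCanonical_eq_canon {ι : Type} (N : ι → Type) [∀ i, AddCommGroup (N i)]
    (M : Type) [AddCommGroup M] : zCanonical N M = canon N M := rfl

section Dominating

variable {M : Type} [AddCommGroup M]

theorem exists_dominating [NoZeroSMulDivisors ℤ M]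
    (hML : ∀ (ι : Type) (N : ι → Type) (_ : ∀ i, AddCommGroup (N i)),
      Function.Injective (zCanonical N M))
    {F : Submodule ℤ M} (hF : F.FG) :
    ∃ G : Submodule ℤ M, F ≤ G ∧ G.FG ∧
      ∀ (k : ℤ) (f : M), f ∈ F → (∃ m : M, f = k • m) → ∃ g ∈ G, f = k • g := by
  classical
  by_contra hcon
  push_neg at hcon
  set κ := {G : Submodule ℤ M // F ≤ G ∧ G.FG} with hκ
  have H : ∀ G : κ,
      ∃ (k : ℤ) (f : M), f ∈ F ∧ (∃ m : M, f = k • m) ∧ ∀ g ∈ G.1, f ≠ k • g := by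
    intro G
    obtain ⟨k, f, h1, h2, h3⟩ := hcon G.1 G.2.1 G.2.2
    exact ⟨k, f, h1, h2, h3⟩
  choose kk ff hfF hfdiv hbad using H
  haveI : Module.Finite ℤ ↥F := Module.Finite.iff_fg.mpr hF
  haveI : Module.Free ℤ ↥F := Module.free_of_finite_type_torsion_free'
  set J := Module.Free.ChooseBasisIndex ℤ ↥F with hJ
  set b : Module.Basis J ℤ ↥F := Module.Free.chooseBasis ℤ ↥F with hb
  set fF : ∀ G : κ, ↥F := fun G => ⟨ff G, hfF G⟩ with hfFdef
  set p : J → (∀ G : κ, ℤ ⧸ AddSubgroup.zmultiples (kk G)) :=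
    fun j G => QuotientAddGroup.mk (b.repr (fF G) j) with hp
  set s : (∀ G : κ, ℤ ⧸ AddSubgroup.zmultiples (kk G)) ⊗[ℤ] ↥F :=
    ∑ j, p j ⊗ₜ[ℤ] b j with hs
  have hmk : ∀ (k c : ℤ), (QuotientAddGroup.mk c : ℤ ⧸ AddSubgroup.zmultiples k) =
      c • (QuotientAddGroup.mk 1 : ℤ ⧸ AddSubgroup.zmultiples k) := by
    intro k c
    have h1 : c • (QuotientAddGroup.mk (1 : ℤ) : ℤ ⧸ AddSubgroup.zmultiples k) =
        QuotientAddGroup.mk (c • (1 : ℤ)) := by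
      rw [← QuotientAddGroup.mk'_apply, ← map_zsmul (QuotientAddGroup.mk' (AddSubgroup.zmultiples k))
        c (1 : ℤ), QuotientAddGroup.mk'_apply]
    rw [h1, smul_eq_mul, mul_one]
  have hcomp : ∀ G : κ, canon (fun G : κ => ℤ ⧸ AddSubgroup.zmultiples (kk G)) ↥F s G =
      QuotientAddGroup.mk 1 ⊗ₜ[ℤ] fF G := by
    intro G
    rw [hs, map_sum]
    have e1 : ∀ j : J, (canon (fun G : κ => ℤ ⧸ AddSubgroup.zmultiples (kk G)) ↥F
        (p j ⊗ₜ[ℤ] b j)) G = (QuotientAddGroup.mk 1 : ℤ ⧸ AddSubgroup.zmultiples (kk G))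
          ⊗ₜ[ℤ] ((b.repr (fF G) j) • b j) := by
      intro j
      rw [canon_tmul]
      rw [hp]
      dsimp only
      rw [hmk (kk G) (b.repr (fF G) j)]
      rw [TensorProduct.smul_tmul]
    rw [Finset.sum_apply]
    calc ∑ j, (canon (fun G : κ => ℤ ⧸ AddSubgroup.zmultiples (kk G)) ↥F (p j ⊗ₜ[ℤ] b j)) G
        = ∑ j, (QuotientAddGroup.mk 1 : ℤ ⧸ AddSubgroup.zmultiples (kk G))
          ⊗ₜ[ℤ] ((b.repr (fF G) j) • b j) := Finset.sum_congr rfl (fun j _ => e1 j)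
    _ = QuotientAddGroup.mk 1 ⊗ₜ[ℤ] fF G := by rw [← TensorProduct.tmul_sum, b.sum_repr]
  choose mm hmm using hfdiv
  have ht : zCanonical (fun G : κ => ℤ ⧸ AddSubgroup.zmultiples (kk G)) M
      (LinearMap.lTensor _ F.subtype s) = 0 := by
    funext G
    rw [zCanonical_eq_canon]
    rw [canon_natural]
    rw [hcomp]
    rw [LinearMap.lTensor_tmul]
    have : (F.subtype (fF G) : M) = kk G • mm G := by
      rw [hfFdef]
      exact hmm G
    rw [this]
    simp only [Pi.zero_apply]
    exact one_tmul_smul_eq_zero (kk G) (mm G)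
  have hs0 : LinearMap.lTensor _ F.subtype s = 0 := by
    apply hML κ (fun G : κ => ℤ ⧸ AddSubgroup.zmultiples (kk G))
      (fun G => inferInstanceAs (AddCommGroup (ℤ ⧸ AddSubgroup.zmultiples (kk G))))
    rw [ht, map_zero]
  obtain ⟨G₀, hFG₀, hG₀fg, hvan⟩ := exists_fg_vanish F hF s hs0
  set i₀ : κ := ⟨G₀, hFG₀, hG₀fg⟩ with hi₀
  have h2 : canon (fun G : κ => ℤ ⧸ AddSubgroup.zmultiples (kk G)) ↥G₀
      (LinearMap.lTensor _ (Submodule.inclusion hFG₀) s) i₀ =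
      QuotientAddGroup.mk 1 ⊗ₜ[ℤ] (Submodule.inclusion hFG₀ (fF i₀)) := by
    rw [canon_natural, hcomp, LinearMap.lTensor_tmul]
  rw [hvan, map_zero] at h2
  simp only [Pi.zero_apply] at h2
  have h3 := exists_of_one_tmul_eq_zero (kk i₀) (Submodule.inclusion hFG₀ (fF i₀)) h2.symm
  obtain ⟨g', hg'G, hg'⟩ := h3
  refine hbad i₀ g' hg'G ?_
  exact hg'.symm

end Dominating

section Extend

variable {M : Type} [AddCommGroup M]

theorem exists_extend [NoZeroSMulDivisors ℤ M]
    {G Y : Submodule ℤ M} (hGY : G ≤ Y) (hY : Y.FG)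
    (hpure : ∀ (k : ℤ) (x : M), k ≠ 0 → x ∈ Y → k • x ∈ G → x ∈ G)
    (s : Set M) (hsG : Submodule.span ℤ s = G)
    (hs : LinearIndependent ℤ ((↑) : s → M)) :
    ∃ t : Set M, s ⊆ t ∧ Submodule.span ℤ t = Y ∧ LinearIndependent ℤ ((↑) : t → M) := by
  classical
  obtain ⟨r, hr⟩ := exists_retraction hGY hY hpure
  set rt : ↥Y →ₗ[ℤ] ↥Y := (Submodule.inclusion hGY) ∘ₗ r with hrt
  set K : Submodule ℤ M := Submodule.map Y.subtype (LinearMap.ker rt) with hK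
  have hKY : K ≤ Y := Submodule.map_subtype_le _ _
  have hrt_idem : ∀ z : ↥Y, rt (rt z) = rt z := by
    intro z
    rw [hrt]
    simp only [LinearMap.coe_comp, Function.comp_apply]
    rw [hr (r z)]
  have hGK_sup : G ⊔ K = Y := by
    apply le_antisymm (sup_le hGY hKY)
    intro y hy
    set z : ↥Y := ⟨y, hy⟩ with hz
    have h1 : (rt z : M) ∈ G := (r z).2
    have h2 : z - rt z ∈ LinearMap.ker rt := by
      rw [LinearMap.mem_ker, map_sub, hrt_idem, sub_self]
    have h3 : y = (rt z : M) + ((z - rt z : ↥Y) : M) := by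
      rw [Submodule.coe_sub]
      show y = ↑(rt z) + ((z : M) - ↑(rt z))
      abel
    rw [h3]
    exact Submodule.add_mem _ (Submodule.mem_sup_left h1)
      (Submodule.mem_sup_right ⟨z - rt z, h2, rfl⟩)
  have hGK_inf : G ⊓ K = ⊥ := by
    rw [eq_bot_iff]
    rintro x ⟨hxG, z, hz, rfl⟩
    have hz_eq : z = Submodule.inclusion hGY ⟨(z : M), hxG⟩ := Subtype.ext rfl
    have h1 : rt z = z := by
      rw [hrt]
      simp only [LinearMap.coe_comp, Function.comp_apply]
      conv_lhs => rw [hz_eq, hr ⟨(z : M), hxG⟩]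
      exact hz_eq.symm
    rw [SetLike.mem_coe, LinearMap.mem_ker, h1] at hz
    rw [Submodule.mem_bot, hz]
    simp
  have hKfg : K.FG := fg_of_le_fg hKY hY
  haveI : Module.Finite ℤ ↥K := Module.Finite.iff_fg.mpr hKfg
  haveI : Module.Free ℤ ↥K := Module.free_of_finite_type_torsion_free'
  set bK := Module.Free.chooseBasis ℤ ↥K with hbK
  set u : Set M := Set.range (fun j => ((bK j : ↥K) : M)) with hu
  have hindep_u : LinearIndependent ℤ (fun j => ((bK j : ↥K) : M)) :=
    (bK.linearIndependent).map' K.subtype (Submodule.ker_subtype K)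
  have hspan_u : Submodule.span ℤ u = K := by
    rw [hu]
    have h4 : (fun j => ((bK j : ↥K) : M)) = (K.subtype) ∘ bK := rfl
    rw [h4, Set.range_comp, Submodule.span_image, Module.Basis.span_eq, Submodule.map_subtype_top]
  refine ⟨s ∪ u, Set.subset_union_left, ?_, ?_⟩
  · rw [Submodule.span_union, hsG, hspan_u, hGK_sup]
  · refine LinearIndepOn.id_union hs hindep_u.linearIndepOn_id ?_
    rw [hsG, hspan_u]
    exact disjoint_iff.mpr hGK_inf

end Extend

section Chain

variable {M : Type} [AddCommGroup M]

theorem free_iSup_chain [NoZeroSMulDivisors ℤ M]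
    (H : ℕ → Submodule ℤ M) (hmono : ∀ n, H n ≤ H (n + 1)) (hfg : ∀ n, (H n).FG)
    (hpure : ∀ n (k : ℤ) (x : M), k ≠ 0 → x ∈ H (n + 1) → k • x ∈ H n → x ∈ H n) :
    Module.Free ℤ ↥(⨆ n, H n) := by
  classical
  -- extended chain starting at ⊥
  set H' : ℕ → Submodule ℤ M := fun n => Nat.casesOn n ⊥ H with hH'
  have hmono' : ∀ n, H' n ≤ H' (n + 1) := by
    intro n
    cases n with
    | zero => exact bot_le
    | succ m => exact hmono m
  have hfg' : ∀ n, (H' n).FG := by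
    intro n
    cases n with
    | zero => exact Submodule.fg_bot
    | succ m => exact hfg m
  have hpure' : ∀ n (k : ℤ) (x : M), k ≠ 0 → x ∈ H' (n + 1) → k • x ∈ H' n → x ∈ H' n := by
    intro n k x hk hx hkx
    cases n with
    | zero =>
      have : k • x = 0 := hkx
      rcases smul_eq_zero.mp this with h | h
      · exact absurd h hk
      · rw [h]; exact Submodule.zero_mem _
    | succ m => exact hpure m k x hk hx hkx
  -- the recursive construction of bases
  have step : ∀ n (s : Set M), LinearIndependent ℤ ((↑) : s → M) → Submodule.span ℤ s = H' n →
      ∃ t : Set M, s ⊆ t ∧ Submodule.span ℤ t = H' (n + 1) ∧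
        LinearIndependent ℤ ((↑) : t → M) := by
    intro n s hind hspan
    obtain ⟨t, h1, h2, h3⟩ := exists_extend (hmono' n) (hfg' (n + 1)) (hpure' n) s hspan hind
    exact ⟨t, h1, h2, h3⟩
  let c : (n : ℕ) → {s : Set M // LinearIndependent ℤ ((↑) : s → M) ∧
      Submodule.span ℤ s = H' n} :=
    fun n => Nat.rec
      ⟨(∅ : Set M), by
        constructor
        · exact linearIndependent_empty_type
        · rw [Submodule.span_empty]⟩
      (fun n prev => ⟨(step n prev.1 prev.2.1 prev.2.2).choose,
        (step n prev.1 prev.2.1 prev.2.2).choose_spec.2.2,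
        (step n prev.1 prev.2.1 prev.2.2).choose_spec.2.1⟩) n
  have hsub : ∀ n, (c n).1 ⊆ (c (n + 1)).1 := by
    intro n
    exact (step n (c n).1 (c n).2.1 (c n).2.2).choose_spec.1
  have hsub' : ∀ {m n : ℕ}, m ≤ n → (c m).1 ⊆ (c n).1 := by
    intro m n hmn
    induction hmn with
    | refl => exact subset_rfl
    | step h ih => exact subset_trans ih (hsub _)
  set T : Set M := ⋃ n, (c n).1 with hT
  have hTindep : LinearIndependent ℤ ((↑) : T → M) := by
    apply linearIndepOn_iUnion_of_directed (v := id)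
    · intro m n
      rcases le_total m n with h | h
      · exact ⟨n, hsub' h, subset_rfl⟩
      · exact ⟨m, subset_rfl, hsub' h⟩
    · intro n
      exact (c n).2.1
  have hTspan : Submodule.span ℤ T = ⨆ n, H n := by
    rw [hT, Submodule.span_iUnion]
    have h1 : ∀ n, Submodule.span ℤ (c n).1 = H' n := fun n => (c n).2.2
    apply le_antisymm
    · apply iSup_le
      intro n
      rw [h1 n]
      cases n with
      | zero => exact bot_le
      | succ m => exact le_iSup (fun n => H n) m
    · apply iSup_le
      intro n
      have : H n = H' (n + 1) := rfl
      rw [this, ← h1 (n + 1)]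
      exact le_iSup (fun n => Submodule.span ℤ (c n).1) (n + 1)
  have hbasis := Module.Basis.span hTindep
  rw [Subtype.range_coe, hTspan] at hbasis
  exact Module.Free.of_basis hbasis
end Chain

section Forward

variable {M : Type} [AddCommGroup M]

theorem forward_free [NoZeroSMulDivisors ℤ M]
    (hML : ∀ (ι : Type) (N : ι → Type) (_ : ∀ i, AddCommGroup (N i)),
      Function.Injective (zCanonical N M))
    (A : Submodule ℤ M) (S : Set M) (hSc : S.Countable) (hSA : Submodule.span ℤ S = A) :
    Module.Free ℤ ↥A := by
  classical
  obtain ⟨g, hg⟩ : ∃ g : ℕ → M, Submodule.span ℤ (Set.range g) = A := by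
    by_cases hne : S.Nonempty
    · obtain ⟨g, hgr⟩ := hSc.exists_eq_range hne
      exact ⟨g, by rw [← hgr, hSA]⟩
    · rw [Set.not_nonempty_iff_eq_empty] at hne
      refine ⟨fun _ => 0, ?_⟩
      rw [Set.range_const]
      rw [hne] at hSA
      rw [Submodule.span_empty] at hSA
      rw [← hSA]
      exact Submodule.span_zero_singleton ℤ
  set F : ℕ → Submodule ℤ M := fun n => Submodule.span ℤ (g '' {i | i ≤ n}) with hF
  have hFfg : ∀ n, (F n).FG := fun n =>
    Submodule.fg_span ((Set.finite_le_nat n).image g)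
  have hFA : ∀ n, F n ≤ A := by
    intro n
    rw [hF, ← hg]
    exact Submodule.span_mono (by rintro x ⟨i, _, rfl⟩; exact Set.mem_range_self i)
  set H : ℕ → Submodule ℤ M := fun n => pclos (F n) ⊓ A with hH
  have hHfg : ∀ n, (H n).FG := by
    intro n
    obtain ⟨G, hFG, hGfg, hdom⟩ := exists_dominating hML (hFfg n)
    apply fg_of_le_fg _ hGfg
    refine le_trans inf_le_left ?_
    rintro x ⟨k, hk, hkx⟩
    obtain ⟨g', hg'G, hgeq⟩ := hdom k (k • x) hkx ⟨x, rfl⟩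
    have : x = g' := smul_right_injective M hk hgeq
    rw [this]
    exact hg'G
  have hHmono : ∀ n, H n ≤ H (n + 1) := by
    intro n
    exact inf_le_inf (pclos_mono (Submodule.span_mono
      (Set.image_mono (fun i (hi : i ≤ n) => le_trans hi (Nat.le_succ n))))) le_rfl
  have hHpure : ∀ n (k : ℤ) (x : M), k ≠ 0 → x ∈ H (n + 1) → k • x ∈ H n → x ∈ H n := by
    intro n k x hk hx hkx
    exact ⟨pclos_pure (F n) k x hk hkx.1, hx.2⟩
  have hsup : (⨆ n, H n) = A := by
    apply le_antisymm
    · exact iSup_le fun n => inf_le_right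
    · rw [← hg]
      rw [Submodule.span_le]
      rintro x ⟨i, rfl⟩
      have h1 : g i ∈ F i := Submodule.subset_span ⟨i, le_refl i, rfl⟩
      have h2 : g i ∈ A := by
        rw [← hg]
        exact Submodule.subset_span (Set.mem_range_self i)
      exact le_iSup H i (Submodule.mem_inf.mpr ⟨le_pclos (F i) h1, h2⟩)
  have := free_iSup_chain H hHmono hHfg hHpure
  rw [hsup] at this
  exact this

end Forward

section Reverse

variable {M : Type} [AddCommGroup M]

theorem nzsd_of_aleph1
    (hfree : ∀ A : Submodule ℤ M, (∃ S : Set M, S.Countable ∧ Submodule.span ℤ S = A) →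
      Module.Free ℤ ↥A) : NoZeroSMulDivisors ℤ M := by
  refine ⟨fun {k x} hkx => ?_⟩
  by_cases hk : k = 0
  · exact Or.inl hk
  refine Or.inr ?_
  haveI hfA : Module.Free ℤ ↥(Submodule.span ℤ ({x} : Set M)) :=
    hfree _ ⟨{x}, Set.countable_singleton x, rfl⟩
  haveI : NoZeroSMulDivisors ℤ ↥(Submodule.span ℤ ({x} : Set M)) :=
    have := Module.isTorsionFree_int_iff_isAddTorsionFree.mp
      (Module.Free.instIsTorsionFree ℤ ↥(Submodule.span ℤ ({x} : Set M))); inferInstance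
  set z : ↥(Submodule.span ℤ ({x} : Set M)) := ⟨x, Submodule.mem_span_singleton_self x⟩ with hz
  have h1 : k • z = 0 := by
    apply Subtype.ext
    rw [Submodule.coe_smul]
    exact hkx
  rcases smul_eq_zero.mp h1 with h | h
  · exact absurd h hk
  · exact congrArg Subtype.val h

theorem fg_countable {F : Submodule ℤ M} (hF : F.FG) : (F : Set M).Countable := by
  obtain ⟨T, hT⟩ := hF
  haveI : Countable ↥(↑T : Set M) := Set.Finite.countable (Finset.finite_toSet T) |>.to_subtype
  haveI h1 : Countable ↥(Submodule.span ℤ (Set.range ((↑) : (↑T : Set M) → M))) :=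
    inferInstance
  rw [Subtype.range_coe] at h1
  rw [← hT]
  exact (Set.countable_coe_iff).mp h1

theorem pclos_countable [NoZeroSMulDivisors ℤ M] {F : Submodule ℤ M}
    (hF : (F : Set M).Countable) : ((pclos F : Submodule ℤ M) : Set M).Countable := by
  classical
  haveI : Countable ↥F := hF.to_subtype
  have hx : ∀ x : ↥(pclos F), ∃ p : ℤ × ↥F, p.1 ≠ 0 ∧ p.1 • (x : M) = (p.2 : M) := by
    rintro ⟨x, k, hk, hkx⟩
    exact ⟨(k, ⟨k • x, hkx⟩), hk, rfl⟩
  choose φ hφ1 hφ2 using hx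
  have hinj : Function.Injective φ := by
    intro a b hab
    apply Subtype.ext
    apply smul_right_injective M (hφ1 a)
    show (φ a).1 • (a : M) = (φ a).1 • (b : M)
    rw [hφ2 a, hab, ← hφ2 b]
  haveI : Countable ↥(pclos F) := hinj.countable
  exact Set.countable_coe_iff.mpr this

theorem pclos_fg_of_free [NoZeroSMulDivisors ℤ M] {F : Submodule ℤ M} (hF : F.FG)
    (hfr : Module.Free ℤ ↥(pclos F)) : (pclos F).FG := by
  classical
  set G := pclos F with hG
  set b := hfr.chooseBasis with hb
  obtain ⟨T, hT⟩ := hF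
  have hmem : ∀ y ∈ T, y ∈ G := by
    intro y hy
    exact le_pclos F (hT ▸ Submodule.subset_span hy)
  set J₀ : Finset (Module.Free.ChooseBasisIndex ℤ ↥G) :=
    T.attach.biUnion (fun y => (b.repr ⟨y.1, hmem y.1 y.2⟩).support) with hJ₀
  set W : Submodule ℤ ↥G := Submodule.span ℤ (⇑b '' ↑J₀) with hW
  have hTW : ∀ y (hy : y ∈ T), (⟨y, hmem y hy⟩ : ↥G) ∈ W := by
    intro y hy
    apply (Module.Basis.mem_span_image b).mpr
    intro j hj
    exact Finset.mem_coe.mpr (Finset.mem_biUnion.mpr ⟨⟨y, hy⟩, Finset.mem_attach _ _, hj⟩)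
  have hFW : ∀ z : ↥G, (z : M) ∈ F → z ∈ W := by
    intro z hzF
    have hFW' : F ≤ Submodule.map G.subtype W := by
      rw [← hT, Submodule.span_le]
      intro y hy
      exact ⟨⟨y, hmem y hy⟩, hTW y hy, rfl⟩
    obtain ⟨w, hwW, hw⟩ := hFW' hzF
    have : w = z := Subtype.ext hw
    rwa [← this]
  have htop : ∀ z : ↥G, z ∈ W := by
    intro z
    obtain ⟨k, hk, hkz⟩ := z.2
    have h1 : ((k • z : ↥G) : M) ∈ F := by
      rw [Submodule.coe_smul]
      exact hkz
    have h2 : (k • z : ↥G) ∈ W := hFW _ h1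
    have h3 := (Module.Basis.mem_span_image b).mp h2
    apply (Module.Basis.mem_span_image b).mpr
    rw [map_smul] at h3
    rwa [Finsupp.support_smul_eq hk] at h3
  have htopW : (⊤ : Submodule ℤ ↥G) = W := by
    apply le_antisymm
    · intro z _; exact htop z
    · exact le_top
  have : (⊤ : Submodule ℤ ↥G).FG := by
    rw [htopW, hW]
    exact Submodule.fg_span ((J₀.finite_toSet).image _)
  exact (Submodule.fg_top G).mp this

end Reverse

section ReverseML

variable {M : Type} [AddCommGroup M]

theorem reverse_ml
    (hfree : ∀ A : Submodule ℤ M, (∃ S : Set M, S.Countable ∧ Submodule.span ℤ S = A) →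
      Module.Free ℤ ↥A)
    (ι : Type) (N : ι → Type) [inst : ∀ i, AddCommGroup (N i)] :
    Function.Injective (zCanonical N M) := by
  classical
  haveI : NoZeroSMulDivisors ℤ M := nzsd_of_aleph1 hfree
  have hker : ∀ t : ((∀ i, N i) ⊗[ℤ] M), zCanonical N M t = 0 → t = 0 := by
    intro t ht
    obtain ⟨F₀, hfin, hsub⟩ := TensorProduct.exists_finite_submodule_right_of_setFinite
      ({t} : Set ((∀ i, N i) ⊗[ℤ] M)) (Set.finite_singleton t)
    haveI := hfin
    have hF₀fg : F₀.FG := Module.Finite.iff_fg.mp hfin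
    obtain ⟨s₀, hs₀⟩ := hsub (Set.mem_singleton t)
    set G := pclos F₀ with hGdef
    haveI hGfree : Module.Free ℤ ↥G :=
      hfree G ⟨(G : Set M), pclos_countable (fg_countable hF₀fg), Submodule.span_eq G⟩
    have hGfg : G.FG := pclos_fg_of_free hF₀fg hGfree
    set s : ((∀ i, N i) ⊗[ℤ] ↥G) :=
      LinearMap.lTensor _ (Submodule.inclusion (le_pclos F₀)) s₀ with hs
    have htG : LinearMap.lTensor _ G.subtype s = t := by
      rw [hs, ← LinearMap.comp_apply, ← LinearMap.lTensor_comp,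
        Submodule.subtype_comp_inclusion]
      exact hs₀
    have hcanonG : ∀ i, canon N ↥G s i = 0 := by
      intro i
      apply lTensor_injective_of_pure hGfg (fun k x hk hkx => pclos_pure F₀ k x hk hkx) (N i)
      rw [map_zero, ← canon_natural, htG, ← zCanonical_eq_canon, ht]
      simp
    haveI : Module.Finite ℤ ↥G := Module.Finite.iff_fg.mpr hGfg
    have hs0 : s = 0 := by
      apply canon_injective_of_free N (Module.Free.chooseBasis ℤ ↥G)
      rw [map_zero]
      funext i
      exact hcanonG i
    rw [← htG, hs0, map_zero]
  intro a b hab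
  rw [← sub_eq_zero]
  exact hker _ (by rw [map_sub, hab, sub_self])

end ReverseML

/-- **Azumaya–Facchini.** An abelian group is torsion-free and Mittag-Leffler if and only if it
is `ℵ₁`-free: every countably generated subgroup is free. -/
theorem abelianGroup_torsionFree_mittagLeffler_iff_aleph1Free (M : Type) [AddCommGroup M] :
    (AddMonoid.IsTorsionFree M ∧
      ∀ (ι : Type) (N : ι → Type) (_ : ∀ i, AddCommGroup (N i)),
        Function.Injective (zCanonical N M)) ↔
      ∀ A : Submodule ℤ M, (∃ S : Set M, S.Countable ∧ Submodule.span ℤ S = A) →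
        Module.Free ℤ ↥A := by
  constructor
  · rintro ⟨hTF, hML⟩ A ⟨S, hSc, hSA⟩
    haveI : NoZeroSMulDivisors ℤ M := AddMonoid.isTorsionFree_iff_noZeroSMulDivisors_int.mp hTF
    exact forward_free hML A S hSc hSA
  · intro hfree
    refine ⟨AddMonoid.isTorsionFree_iff_noZeroSMulDivisors_int.mpr (nzsd_of_aleph1 hfree), ?_⟩
    intro ι N instN
    exact reverse_ml hfree ι N
end
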